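/- arXiv:2510.26400 — 4 statements merged into one kernel-verified Lean document; each statement's English description precedes it below -/
import Mathlib

section
/- Let n ≥ 1 be an integer, p ∈ (1,∞), p' = p/(p−1), α ∈ (0, n/p) and s > n − αp. Then there exists a constant C > 0, depending only on n, p, α and s, such that for every Borel probability measure μ on ℝⁿ and every c > 0 with μ(B(x,r)) ≤ c·r^s for all x ∈ ℝⁿ and r > 0, one has ( ∫_{ℝⁿ} ( ∫_{ℝⁿ} |x−y|^{α−n} dμ(y) )^{p'} dx )^{1/p'} ≤ C · c^{(n−αp)/(sp)}. -/
open MeasureTheory Metric Set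
open scoped ENNReal NNReal

lemma my_iSup_rpow {ι : Type*} [Nonempty ι] (a : ι → ℝ≥0∞) {q : ℝ} (hq : 0 < q) :
    (⨆ i, a i) ^ q = ⨆ i, (a i) ^ q := by
  refine le_antisymm ?_ (iSup_le fun i => ENNReal.rpow_le_rpow (le_iSup a i) hq.le)
  have h1 : ∀ x : ℝ≥0∞, (x ^ q) ^ (1/q) = x := fun x => by
    rw [← ENNReal.rpow_mul, mul_one_div_cancel hq.ne', ENNReal.rpow_one]
  have h2 : (⨆ i, a i) ≤ (⨆ i, (a i) ^ q) ^ (1/q) := by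
    refine iSup_le fun i => ?_
    rw [← h1 (a i)]
    exact ENNReal.rpow_le_rpow (le_iSup (fun i => (a i) ^ q) i) (by positivity)
  calc (⨆ i, a i) ^ q ≤ ((⨆ i, (a i) ^ q) ^ (1/q)) ^ q := ENNReal.rpow_le_rpow h2 hq.le
    _ = ⨆ i, (a i) ^ q := by
        rw [← ENNReal.rpow_mul, one_div_mul_cancel hq.ne', ENNReal.rpow_one]

lemma my_finset_minkowski {X : Type*} [MeasurableSpace X] (ν : Measure X) {ι : Type*}
    (f : ι → X → ℝ≥0∞) (hf : ∀ i, Measurable (f i)) {q : ℝ} (hq : 1 ≤ q)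
    (s : Finset ι) :
    (∫⁻ x, (∑ i ∈ s, f i x) ^ q ∂ν) ^ (1/q) ≤ ∑ i ∈ s, (∫⁻ x, (f i x) ^ q ∂ν) ^ (1/q) := by
  classical
  induction s using Finset.induction_on with
  | empty =>
      have hq0 : (0:ℝ) < q := lt_of_lt_of_le zero_lt_one hq
      simp only [Finset.sum_empty, ENNReal.zero_rpow_of_pos hq0, lintegral_zero,
        ENNReal.zero_rpow_of_pos (by positivity : (0:ℝ) < 1/q), le_refl]
  | @insert a s ha ih =>
      simp only [Finset.sum_insert ha]
      calc (∫⁻ x, (f a x + ∑ i ∈ s, f i x) ^ q ∂ν) ^ (1/q)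
          ≤ (∫⁻ x, (f a x) ^ q ∂ν) ^ (1/q) + (∫⁻ x, (∑ i ∈ s, f i x) ^ q ∂ν) ^ (1/q) :=
            ENNReal.lintegral_Lp_add_le (hf a).aemeasurable
              (Finset.measurable_sum s fun i _ => hf i).aemeasurable hq
        _ ≤ _ := by gcongr

lemma my_tsum_minkowski {X : Type*} [MeasurableSpace X] (ν : Measure X) {ι : Type*} [Countable ι]
    (f : ι → X → ℝ≥0∞) (hf : ∀ i, Measurable (f i)) {q : ℝ} (hq : 1 ≤ q) :
    (∫⁻ x, (∑' i, f i x) ^ q ∂ν) ^ (1/q) ≤ ∑' i, (∫⁻ x, (f i x) ^ q ∂ν) ^ (1/q) := by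
  classical
  have hq0 : (0:ℝ) < q := lt_of_lt_of_le zero_lt_one hq
  have key : ∫⁻ x, (∑' i, f i x) ^ q ∂ν
      = ⨆ s : Finset ι, ∫⁻ x, (∑ i ∈ s, f i x) ^ q ∂ν := by
    have : ∀ x, (∑' i, f i x) ^ q = ⨆ s : Finset ι, (∑ i ∈ s, f i x) ^ q := by
      intro x
      rw [ENNReal.tsum_eq_iSup_sum, my_iSup_rpow _ hq0]
    simp_rw [this]
    refine lintegral_iSup_directed (fun s => ((Finset.measurable_sum s fun i _ => hf i).pow_const q).aemeasurable) ?_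
    intro s t
    refine ⟨s ∪ t, ?_, ?_⟩ <;>
      · intro x
        refine ENNReal.rpow_le_rpow ?_ hq0.le
        exact Finset.sum_le_sum_of_subset (by simp)
  rw [key]
  have : ∀ s : Finset ι, (∫⁻ x, (∑ i ∈ s, f i x) ^ q ∂ν) ≤ (∑' i, (∫⁻ x, (f i x) ^ q ∂ν) ^ (1/q)) ^ q := by
    intro s
    have h := my_finset_minkowski ν f hf hq s
    have h2 : (∑ i ∈ s, (∫⁻ x, (f i x) ^ q ∂ν) ^ (1/q)) ≤ ∑' i, (∫⁻ x, (f i x) ^ q ∂ν) ^ (1/q) :=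
      ENNReal.sum_le_tsum s
    have := ENNReal.rpow_le_rpow (h.trans h2) hq0.le
    rwa [← ENNReal.rpow_mul, one_div_mul_cancel hq0.ne', ENNReal.rpow_one] at this
  calc (⨆ s : Finset ι, ∫⁻ x, (∑ i ∈ s, f i x) ^ q ∂ν) ^ (1/q)
      ≤ ((∑' i, (∫⁻ x, (f i x) ^ q ∂ν) ^ (1/q)) ^ q) ^ (1/q) :=
        ENNReal.rpow_le_rpow (iSup_le this) (by positivity)
    _ = _ := by rw [← ENNReal.rpow_mul, mul_one_div_cancel hq0.ne', ENNReal.rpow_one]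

lemma my_ball_lintegral (n : ℕ) (μ : Measure (EuclideanSpace ℝ (Fin n)))
    [IsProbabilityMeasure μ] (r : ℝ) :
    ∫⁻ x, μ (ball x r) = volume (ball (0 : EuclideanSpace ℝ (Fin n)) r) := by
  set E := EuclideanSpace ℝ (Fin n)
  set S : Set (E × E) := {p : E × E | dist p.2 p.1 < r} with hSdef
  have hS : MeasurableSet S := by
    have : Continuous fun p : E × E => dist p.2 p.1 :=
      continuous_dist.comp (continuous_snd.prodMk continuous_fst)
    exact (isOpen_lt this continuous_const).measurableSet
  have h1 : ∀ x : E, μ (ball x r) = ∫⁻ y, S.indicator (fun _ => (1 : ℝ≥0∞)) (x, y) ∂μ := by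
    intro x
    have : (fun y => S.indicator (fun _ => (1 : ℝ≥0∞)) (x, y))
        = (ball x r).indicator (fun _ => (1 : ℝ≥0∞)) := by
      funext y
      by_cases h : y ∈ ball x r
      · rw [Set.indicator_of_mem h, Set.indicator_of_mem (by simpa [hSdef] using mem_ball.1 h)]
      · rw [Set.indicator_of_notMem h,
          Set.indicator_of_notMem (by simpa [hSdef] using fun hh => h (mem_ball.2 hh))]
    rw [this, lintegral_indicator measurableSet_ball, setLIntegral_one]
  calc ∫⁻ x, μ (ball x r)
      = ∫⁻ x, ∫⁻ y, S.indicator (fun _ => (1 : ℝ≥0∞)) (x, y) ∂μ ∂volume := by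
        simp_rw [h1]
        rfl
    _ = ∫⁻ y, ∫⁻ x, S.indicator (fun _ => (1 : ℝ≥0∞)) (x, y) ∂volume ∂μ :=
        lintegral_lintegral_swap ((measurable_const.indicator hS).aemeasurable)
    _ = ∫⁻ y, volume (ball y r) ∂μ := by
        refine lintegral_congr fun y => ?_
        have : (fun x => S.indicator (fun _ => (1 : ℝ≥0∞)) (x, y))
            = (ball y r).indicator (fun _ => (1 : ℝ≥0∞)) := by
          funext x
          by_cases h : x ∈ ball y r
          · rw [Set.indicator_of_mem h, Set.indicator_of_mem
              (by simpa [hSdef, dist_comm] using mem_ball.1 h)]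
          · rw [Set.indicator_of_notMem h, Set.indicator_of_notMem
              (by simpa [hSdef, dist_comm] using fun hh => h (mem_ball.2 hh))]
        rw [this, lintegral_indicator measurableSet_ball, setLIntegral_one]
    _ = volume (ball (0 : E) r) := by
        simp_rw [Measure.addHaar_ball_center]
        simp


lemma my_exp1 (nr p s α : ℝ) (hp : p ≠ 0) (hs : s ≠ 0) :
    1/p + -(1/s) * (α + (s - nr)/p) = (nr - α*p)/(s*p) := by field_simp; ring

lemma my_exp2 (nr p s α : ℝ) (hp : p ≠ 0) (hs : s ≠ 0) :
    -(1/s) * (α - nr/p) = (nr - α*p)/(s*p) := by field_simp; ring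

lemma my_exp3 (nr p s α : ℝ) (hp : p ≠ 0) (hp1 : p - 1 ≠ 0) :
    α - nr + (s/p + nr/(p/(p-1))) = α + (s - nr)/p := by field_simp; ring

lemma my_exp4 (nr p α : ℝ) (hp : p ≠ 0) (hp1 : p - 1 ≠ 0) :
    α - nr + nr/(p/(p-1)) = α - nr/p := by field_simp; ring

set_option maxHeartbeats 1000000 in
theorem statement2 (n : ℕ) (hn : 1 ≤ n) (p α s : ℝ) (hp : 1 < p)
    (hα : 0 < α) (hα' : α < n / p) (hs : (n : ℝ) - α * p < s) :
    ∃ C : ℝ, 0 < C ∧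
      ∀ μ : Measure (EuclideanSpace ℝ (Fin n)), IsProbabilityMeasure μ →
        ∀ c : ℝ, 0 < c →
          (∀ (x : EuclideanSpace ℝ (Fin n)) (r : ℝ), 0 < r →
            μ (Metric.ball x r) ≤ ENNReal.ofReal (c * r ^ s)) →
          (∫⁻ x, (∫⁻ y, (ENNReal.ofReal ‖x - y‖) ^ (α - (n : ℝ)) ∂μ) ^ (p / (p - 1))) ^
              (1 / (p / (p - 1))) ≤
            ENNReal.ofReal (C * c ^ (((n : ℝ) - α * p) / (s * p))) := by
  classical
  set E := EuclideanSpace ℝ (Fin n) with hEdef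
  -- basic real facts
  have hp0 : (0:ℝ) < p := by linarith
  have hp1 : (0:ℝ) < p - 1 := by linarith
  set q : ℝ := p / (p - 1) with hqdef
  have hq1 : 1 < q := (one_lt_div hp1).2 (by linarith)
  have hq0 : (0:ℝ) < q := by linarith
  have npos : (0:ℝ) < n := by exact_mod_cast Nat.lt_of_lt_of_le Nat.zero_lt_one hn
  have hnap : 0 < (n:ℝ) - α * p := by
    have := (lt_div_iff₀ hp0).1 hα'; linarith
  have hs0 : (0:ℝ) < s := lt_trans hnap hs
  have hαn : α < n := by
    have : (n:ℝ)/p ≤ n := by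
      rw [div_le_iff₀ hp0]; nlinarith
    linarith
  -- exponents
  set γ : ℝ := ((n:ℝ) - α * p) / (s * p) with hγdef
  set e : ℝ := α + (s - n) / p with hedef
  have he : 0 < e := by
    have h : e = (α * p + (s - n)) / p := by rw [hedef]; field_simp
    rw [h]; exact div_pos (by linarith) hp0
  set β : ℝ := α - n / p with hβdef
  have hβ : β < 0 := by rw [hβdef]; linarith
  set w₁ : ℝ := (2:ℝ) ^ (-e) with hw1def
  set w₂ : ℝ := (2:ℝ) ^ β with hw2def
  have hw1pos : 0 < w₁ := Real.rpow_pos_of_pos two_pos _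
  have hw1lt : w₁ < 1 := Real.rpow_lt_one_of_one_lt_of_neg one_lt_two (by linarith)
  have hw2pos : 0 < w₂ := Real.rpow_pos_of_pos two_pos _
  have hw2lt : w₂ < 1 := Real.rpow_lt_one_of_one_lt_of_neg one_lt_two hβ
  set C₁ : ℝ := 2 ^ ((n:ℝ) - α) * 2 ^ (s/p) * 2 ^ ((n:ℝ)/q) with hC1def
  set C₂ : ℝ := (2 ^ ((n:ℝ) - α) * 2 ^ ((n:ℝ)/q)) * w₂ with hC2def
  have hC1pos : 0 < C₁ := by positivity
  have hC2pos : 0 < C₂ := by positivity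
  set V : ℝ≥0∞ := volume (ball (0 : E) 1) with hVdef
  have hVtop : V ≠ ∞ := measure_ball_lt_top.ne
  have hVq : V ^ (1/q) ≠ ∞ := ENNReal.rpow_ne_top_of_nonneg (by positivity) hVtop
  set KK : ℝ≥0∞ := ENNReal.ofReal C₁ * V ^ (1/q) * (1 - ENNReal.ofReal w₁)⁻¹
      + ENNReal.ofReal C₂ * V ^ (1/q) * (1 - ENNReal.ofReal w₂)⁻¹ with hKKdef
  have hKKtop : KK ≠ ∞ := by
    have h1 : (1 - ENNReal.ofReal w₁) ≠ 0 := by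
      simp only [ne_eq, tsub_eq_zero_iff_le, not_le]
      exact lt_of_lt_of_le (ENNReal.ofReal_lt_one.2 hw1lt) le_rfl
    have h2 : (1 - ENNReal.ofReal w₂) ≠ 0 := by
      simp only [ne_eq, tsub_eq_zero_iff_le, not_le]
      exact lt_of_lt_of_le (ENNReal.ofReal_lt_one.2 hw2lt) le_rfl
    refine ENNReal.add_ne_top.2 ⟨?_, ?_⟩ <;>
      exact ENNReal.mul_ne_top (ENNReal.mul_ne_top ENNReal.ofReal_ne_top hVq)
        (ENNReal.inv_ne_top.2 ‹_›)
  refine ⟨KK.toReal + 1, by positivity, ?_⟩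
  intro μ hμ c hc hgrow
  have hc0 : (0:ℝ) ≤ c := hc.le
  set R : ℝ := c ^ (-(1/s)) with hRdef
  have hR : 0 < R := Real.rpow_pos_of_pos hc _
  set ρ : ℤ → ℝ := fun j => R * (2:ℝ) ^ (-(j:ℝ)) with hρdef
  have hρpos : ∀ j, 0 < ρ j := fun j => mul_pos hR (Real.rpow_pos_of_pos two_pos _)
  have hρsucc : ∀ j : ℤ, ρ (j+1) = ρ j / 2 := by
    intro j
    simp only [hρdef]
    push_cast
    rw [neg_add, Real.rpow_add two_pos, Real.rpow_neg_one]
    ring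
  have hρanti : ∀ i j : ℤ, i ≤ j → ρ j ≤ ρ i := by
    intro i j h
    refine mul_le_mul_of_nonneg_left ?_ hR.le
    exact Real.rpow_le_rpow_of_exponent_le one_le_two
      (neg_le_neg (by exact_mod_cast h))
  set K : E → E → ℝ≥0∞ := fun x y => (ENNReal.ofReal ‖x - y‖) ^ (α - (n:ℝ)) with hKdef
  set D : E → ℤ → Set E := fun x j => {y | ρ (j+1) < dist x y ∧ dist x y ≤ ρ j} with hDdef
  have hDmeas : ∀ (x : E) (j : ℤ), MeasurableSet (D x j) := by
    intro x j
    have h : D x j = (fun y => dist x y) ⁻¹' (Ioc (ρ (j+1)) (ρ j)) := rfl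
    rw [h]
    exact (continuous_const.dist continuous_id).measurable measurableSet_Ioc
  set G : ℤ → E → ℝ≥0∞ := fun j x => ∫⁻ y in D x j, K x y ∂μ with hGdef
  have hGmeas : ∀ j, Measurable (G j) := by
    intro j
    set S : Set (E × E) := {p : E × E | ρ (j+1) < dist p.1 p.2 ∧ dist p.1 p.2 ≤ ρ j} with hSdef
    have hSj : MeasurableSet S := by
      have h : S = (fun p : E × E => dist p.1 p.2) ⁻¹' (Ioc (ρ (j+1)) (ρ j)) := rfl
      rw [h]
      exact continuous_dist.measurable measurableSet_Ioc
    have hKm : Measurable (fun p : E × E => K p.1 p.2) := by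
      simp only [hKdef]
      exact (((continuous_fst.sub continuous_snd).norm.measurable).ennreal_ofReal).pow_const _
    have h : G j = fun x => ∫⁻ y, (S.indicator (fun p => K p.1 p.2)) (x, y) ∂μ := by
      funext x
      simp only [hGdef]
      rw [← lintegral_indicator (hDmeas x j)]
      refine lintegral_congr fun y => ?_
      by_cases h : y ∈ D x j
      · rw [Set.indicator_of_mem h, Set.indicator_of_mem (by exact h)]
      · rw [Set.indicator_of_notMem h, Set.indicator_of_notMem (by exact h)]
    rw [h]
    exact (hKm.indicator hSj).lintegral_prod_right'
  have hsx : ∀ x : E, μ {x} = 0 := by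
    intro x
    refine le_antisymm ?_ zero_le
    refine ENNReal.le_of_forall_pos_le_add fun ε hε _ => ?_
    set r : ℝ := ((ε:ℝ) / (2*c)) ^ (1/s) with hrdef
    have hεc : (0:ℝ) < (ε:ℝ) / (2*c) := by positivity
    have hr : 0 < r := Real.rpow_pos_of_pos hεc _
    have h1 : μ {x} ≤ ENNReal.ofReal (c * r ^ s) := by
      refine le_trans (measure_mono ?_) (hgrow x r hr)
      intro y hy
      simp only [mem_singleton_iff] at hy
      simp [hy, mem_ball, hr]
    have h2 : c * r ^ s = (ε:ℝ)/2 := by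
      rw [hrdef, ← Real.rpow_mul hεc.le, one_div_mul_cancel hs0.ne', Real.rpow_one]
      field_simp
    calc μ {x} ≤ ENNReal.ofReal (c * r ^ s) := h1
      _ = ENNReal.ofReal ((ε:ℝ)/2) := by rw [h2]
      _ ≤ 0 + (ε : ℝ≥0∞) := by
          rw [zero_add, ← ENNReal.ofReal_coe_nnreal]
          exact ENNReal.ofReal_le_ofReal (by simpa using (half_le_self ε.coe_nonneg))
  have hcover : ∀ x : E, ({x} : Set E)ᶜ = ⋃ j : ℤ, D x j := by
    intro x
    ext y
    simp only [mem_compl_iff, mem_singleton_iff, mem_iUnion, hDdef, mem_setOf_eq]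
    constructor
    · intro hy
      have hd : 0 < dist x y := dist_pos.2 fun h => hy h.symm
      obtain ⟨m, hm⟩ := exists_mem_Ioc_zpow (div_pos hd hR) one_lt_two
      refine ⟨-(m+1), ?_, ?_⟩
      · have hρm : ρ (-(m+1)+1) = R * (2:ℝ) ^ m := by
          simp only [hρdef]
          congr 1
          rw [show (-(m+1)+1 : ℤ) = -m by ring]
          push_cast
          rw [← Real.rpow_intCast 2 m]
          norm_num
        rw [hρm]
        have := hm.1
        rw [lt_div_iff₀ hR] at this
        linarith
      · have hρm : ρ (-(m+1)) = R * (2:ℝ) ^ (m+1) := by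
          simp only [hρdef]
          congr 1
          push_cast
          rw [← Real.rpow_intCast 2 (m+1)]
          push_cast
          ring_nf
        rw [hρm]
        have := hm.2
        rw [div_le_iff₀ hR] at this
        linarith
    · rintro ⟨j, h1, h2⟩ hyx
      rw [hyx] at h1
      have h1 : ρ (j+1) < 0 := h1.trans_le (le_of_eq (dist_self _))
      exact absurd h1 (not_lt.2 (hρpos _).le)
  have hdisj : ∀ x : E, Pairwise (Function.onFun Disjoint (D x)) := by
    intro x
    have haux : ∀ i j : ℤ, i < j → Disjoint (D x i) (D x j) := by
      intro i j hij
      rw [Set.disjoint_left]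
      intro y hyi hyj
      have h1 : dist x y ≤ ρ j := hyj.2
      have h2 : ρ (i+1) < dist x y := hyi.1
      have h3 : ρ j ≤ ρ (i+1) := hρanti _ _ (by omega)
      linarith
    intro i j hij
    rcases hij.lt_or_gt with h | h
    · exact haux i j h
    · exact (haux j i h).symm
  have hdecomp : ∀ x : E, ∫⁻ y, K x y ∂μ = ∑' j : ℤ, G j x := by
    intro x
    have h0 : ∫⁻ y in {x}, K x y ∂μ = 0 := setLIntegral_measure_zero _ _ (hsx x)
    rw [← lintegral_add_compl (fun y => K x y) (MeasurableSet.singleton x), h0, zero_add,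
      hcover x, lintegral_iUnion (hDmeas x) (hdisj x)]
  haveI : Nonempty (Fin n) := ⟨⟨0, hn⟩⟩
  have hqinv : 1/q = (p-1)/p := by rw [hqdef]; rw [one_div_div]
  have hq1p : (q - 1) * (1/q) = 1/p := by
    rw [hqdef]
    field_simp
    ring
  have hmb : ∀ (x : E) (r : ℝ), 0 < r →
      μ (ball x r) ≤ min 1 (ENNReal.ofReal (c * r ^ s)) :=
    fun x r hr => le_min prob_le_one (hgrow x r hr)
  have hball : ∀ r : ℝ, 0 ≤ r → volume (ball (0 : E) r) = ENNReal.ofReal (r ^ (n:ℝ)) * V := by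
    intro r hr
    rw [hVdef, Measure.addHaar_ball _ _ hr, finrank_euclideanSpace_fin, ← Real.rpow_natCast r n]
  have hLq : ∀ r : ℝ, 0 < r → ∫⁻ x, μ (ball x r) ^ q
      ≤ (min 1 (ENNReal.ofReal (c * r ^ s))) ^ (q - 1) * (ENNReal.ofReal (r ^ (n:ℝ)) * V) := by
    intro r hr
    have hmtop : (min 1 (ENNReal.ofReal (c * r ^ s))) ^ (q-1) ≠ ∞ :=
      ENNReal.rpow_ne_top_of_nonneg (by linarith)
        ((min_le_left _ _).trans_lt ENNReal.one_lt_top).ne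
    calc ∫⁻ x, μ (ball x r) ^ q
        ≤ ∫⁻ x, (min 1 (ENNReal.ofReal (c * r ^ s))) ^ (q-1) * μ (ball x r) := by
          refine lintegral_mono fun x => ?_
          have hsplit : μ (ball x r) ^ q = μ (ball x r) ^ (q-1) * μ (ball x r) := by
            rw [show q = (q-1)+1 by ring,
              ENNReal.rpow_add_of_nonneg _ _ (by linarith) zero_le_one, ENNReal.rpow_one]
            ring_nf
          rw [hsplit]
          exact mul_le_mul_left (ENNReal.rpow_le_rpow (hmb x r hr) (by linarith)) _
      _ = (min 1 (ENNReal.ofReal (c * r ^ s))) ^ (q-1) * ∫⁻ x, μ (ball x r) :=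
          lintegral_const_mul' _ _ hmtop
      _ = _ := by rw [my_ball_lintegral n μ r, hball r hr.le]
  set T : ℤ → ℝ≥0∞ := fun j => ENNReal.ofReal ((ρ j / 2) ^ (α - (n:ℝ)))
      * ((min 1 (ENNReal.ofReal (c * (2 * ρ j) ^ s))) ^ (1/p)
        * (ENNReal.ofReal ((2 * ρ j) ^ (n:ℝ)) * V) ^ (1/q)) with hTdef
  have hTj : ∀ j : ℤ, (∫⁻ x, (G j x) ^ q) ^ (1/q) ≤ T j := by
    intro j
    set r : ℝ := 2 * ρ j with hrdef
    have hr : 0 < r := by have := hρpos j; positivity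
    set A : ℝ≥0∞ := ENNReal.ofReal ((ρ j / 2) ^ (α - (n:ℝ))) with hAdef
    have hKb : ∀ x : E, ∀ y ∈ D x j, K x y ≤ A := by
      intro x y hy
      have hd2 : ρ j / 2 < dist x y := by
        have := hy.1
        rwa [hρsucc j] at this
      have hdpos : (0:ℝ) < ρ j / 2 := by have := hρpos j; positivity
      have hKxy : K x y = (ENNReal.ofReal (dist x y)) ^ (α - (n:ℝ)) := by
        exact congrArg (fun t => ENNReal.ofReal t ^ (α - (n:ℝ))) (dist_eq_norm x y).symm
      rw [hKxy, hAdef, ← ENNReal.ofReal_rpow_of_pos hdpos]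
      rw [show α - (n:ℝ) = -((n:ℝ) - α) by ring, ENNReal.rpow_neg, ENNReal.rpow_neg]
      exact ENNReal.inv_le_inv' (ENNReal.rpow_le_rpow
        (ENNReal.ofReal_le_ofReal (by linarith)) (by linarith))
    have hGb : ∀ x, G j x ≤ A * μ (ball x r) := by
      intro x
      have h1 : G j x ≤ ∫⁻ _ in D x j, A ∂μ := by
        simp only [hGdef]
        exact setLIntegral_mono' (hDmeas x j) (hKb x)
      rw [setLIntegral_const] at h1
      refine h1.trans (mul_le_mul_right (measure_mono fun y hy => ?_) _)
      have h2 := hy.2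
      have h3 := hρpos j
      simp only [mem_ball, dist_comm]
      rw [hrdef]; linarith
    have h2 : ∫⁻ x, (G j x) ^ q
        ≤ A ^ q * ((min 1 (ENNReal.ofReal (c * r ^ s))) ^ (q-1)
            * (ENNReal.ofReal (r ^ (n:ℝ)) * V)) := by
      calc ∫⁻ x, (G j x) ^ q ≤ ∫⁻ x, A ^ q * μ (ball x r) ^ q := by
            refine lintegral_mono fun x => ?_
            rw [← ENNReal.mul_rpow_of_nonneg _ _ hq0.le]
            exact ENNReal.rpow_le_rpow (hGb x) hq0.le
        _ = A ^ q * ∫⁻ x, μ (ball x r) ^ q :=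
            lintegral_const_mul' _ _
              (ENNReal.rpow_ne_top_of_nonneg hq0.le ENNReal.ofReal_ne_top)
        _ ≤ _ := mul_le_mul_right (hLq r hr) _
    have h3 := ENNReal.rpow_le_rpow h2 (by positivity : (0:ℝ) ≤ 1/q)
    rw [ENNReal.mul_rpow_of_nonneg _ _ (by positivity),
      ENNReal.mul_rpow_of_nonneg _ _ (by positivity),
      ← ENNReal.rpow_mul A, ← ENNReal.rpow_mul,
      mul_one_div_cancel hq0.ne', ENNReal.rpow_one, hq1p] at h3
    exact h3
  -- real identities
  have idgen : ∀ P : ℝ, 0 < P → (P/2)^(α-(n:ℝ)) * ((c*(2*P)^s)^(1/p) * ((2*P)^(n:ℝ))^(1/q))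
      = C₁ * (c^(1/p) * P^e) := by
    intro P hP
    rw [Real.div_rpow hP.le two_pos.le, Real.mul_rpow hc0 (by positivity),
      ← Real.rpow_mul (by positivity : (0:ℝ) ≤ 2*P),
      ← Real.rpow_mul (by positivity : (0:ℝ) ≤ 2*P),
      mul_one_div, mul_one_div,
      Real.mul_rpow two_pos.le hP.le, Real.mul_rpow two_pos.le hP.le,
      div_eq_mul_inv, ← Real.rpow_neg two_pos.le, neg_sub]
    have hPcomb : P^(α-(n:ℝ)) * (P^(s/p) * P^((n:ℝ)/q)) = P^e := by
      rw [← Real.rpow_add hP, ← Real.rpow_add hP]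
      congr 1
      rw [hedef, hqdef]
      exact my_exp3 n p s α hp0.ne' hp1.ne'
    calc P ^ (α - (n:ℝ)) * 2 ^ ((n:ℝ) - α) * (c ^ (1/p) * (2 ^ (s/p) * P ^ (s/p))
            * (2 ^ ((n:ℝ)/q) * P ^ ((n:ℝ)/q)))
        = (2 ^ ((n:ℝ) - α) * 2 ^ (s/p) * 2 ^ ((n:ℝ)/q))
            * (c ^ (1/p) * (P^(α-(n:ℝ)) * (P^(s/p) * P^((n:ℝ)/q)))) := by ring
      _ = C₁ * (c^(1/p) * P^e) := by rw [hPcomb, hC1def]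
  have idgen2 : ∀ P : ℝ, 0 < P → (P/2)^(α-(n:ℝ)) * ((2*P)^(n:ℝ))^(1/q)
      = (2 ^ ((n:ℝ) - α) * 2 ^ ((n:ℝ)/q)) * P^β := by
    intro P hP
    rw [← Real.rpow_mul (by positivity : (0:ℝ) ≤ 2*P), mul_one_div,
      Real.div_rpow hP.le two_pos.le,
      Real.mul_rpow two_pos.le hP.le,
      div_eq_mul_inv, ← Real.rpow_neg two_pos.le, neg_sub]
    have hPcomb : P^(α-(n:ℝ)) * P^((n:ℝ)/q) = P^β := by
      rw [← Real.rpow_add hP]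
      congr 1
      rw [hβdef, hqdef]
      exact my_exp4 n p α hp0.ne' hp1.ne'
    calc P ^ (α - (n:ℝ)) * 2 ^ ((n:ℝ) - α) * (2 ^ ((n:ℝ)/q) * P ^ ((n:ℝ)/q))
        = (2 ^ ((n:ℝ) - α) * 2 ^ ((n:ℝ)/q)) * (P^(α-(n:ℝ)) * P^((n:ℝ)/q)) := by ring
      _ = _ := by rw [hPcomb]
  have hc1 : c^(1/p) * R^e = c^γ := by
    rw [hRdef, ← Real.rpow_mul hc0, ← Real.rpow_add hc]
    congr 1
    rw [hedef, hγdef]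
    exact my_exp1 n p s α hp0.ne' hs0.ne'
  have hc2 : R^β = c^γ := by
    rw [hRdef, ← Real.rpow_mul hc0]
    congr 1
    rw [hβdef, hγdef]
    exact my_exp2 n p s α hp0.ne' hs0.ne'
  have hρt : ∀ t : ℕ, (ρ ((t:ℤ)))^e = R^e * w₁^t := by
    intro t
    simp only [hρdef]
    rw [Real.mul_rpow hR.le (by positivity)]
    congr 1
    push_cast
    rw [hw1def, ← Real.rpow_natCast ((2:ℝ)^(-e)) t, ← Real.rpow_mul two_pos.le,
      ← Real.rpow_mul two_pos.le]
    ring_nf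
  have hρl : ∀ t : ℕ, (ρ (-((t:ℤ)+1)))^β = R^β * (w₂ * w₂^t) := by
    intro t
    simp only [hρdef]
    rw [Real.mul_rpow hR.le (by positivity)]
    congr 1
    push_cast
    rw [hw2def, ← Real.rpow_natCast ((2:ℝ)^β) t, ← Real.rpow_mul two_pos.le,
      ← Real.rpow_mul two_pos.le, ← Real.rpow_add two_pos]
    ring_nf
  -- branch bounds
  have hsmall : ∀ t : ℕ, T ((t:ℤ))
      ≤ (ENNReal.ofReal (c^γ) * (ENNReal.ofReal C₁ * V^(1/q))) * (ENNReal.ofReal w₁)^t := by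
    intro t
    have hρj := hρpos ((t:ℤ))
    have hrr : (0:ℝ) < 2 * ρ ((t:ℤ)) := by linarith
    have hm1 : (min 1 (ENNReal.ofReal (c * (2*ρ ((t:ℤ)))^s)))^(1/p)
        ≤ ENNReal.ofReal ((c * (2*ρ ((t:ℤ)))^s)^(1/p)) := by
      rw [← ENNReal.ofReal_rpow_of_nonneg (by positivity) (by positivity)]
      exact ENNReal.rpow_le_rpow (min_le_right _ _) (by positivity)
    have hB : (ENNReal.ofReal ((2*ρ ((t:ℤ)))^(n:ℝ)) * V)^(1/q)
        = ENNReal.ofReal (((2*ρ ((t:ℤ)))^(n:ℝ))^(1/q)) * V^(1/q) := by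
      rw [ENNReal.mul_rpow_of_nonneg _ _ (by positivity),
        ENNReal.ofReal_rpow_of_nonneg (by positivity) (by positivity)]
    calc T ((t:ℤ))
        ≤ ENNReal.ofReal ((ρ ((t:ℤ))/2)^(α-(n:ℝ)))
            * (ENNReal.ofReal ((c*(2*ρ ((t:ℤ)))^s)^(1/p))
              * (ENNReal.ofReal (((2*ρ ((t:ℤ)))^(n:ℝ))^(1/q)) * V^(1/q))) := by
          simp only [hTdef]
          rw [hB]
          exact mul_le_mul_right (mul_le_mul' hm1 le_rfl) _
      _ = ENNReal.ofReal ((ρ ((t:ℤ))/2)^(α-(n:ℝ))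
            * ((c*(2*ρ ((t:ℤ)))^s)^(1/p) * ((2*ρ ((t:ℤ)))^(n:ℝ))^(1/q))) * V^(1/q) := by
          rw [ENNReal.ofReal_mul (by positivity), ENNReal.ofReal_mul (by positivity)]
          ring
      _ = ENNReal.ofReal (C₁ * (c^γ * w₁^t)) * V^(1/q) := by
          rw [idgen _ hρj, hρt t, ← hc1]
          ring_nf
      _ = (ENNReal.ofReal (c^γ) * (ENNReal.ofReal C₁ * V^(1/q))) * (ENNReal.ofReal w₁)^t := by
          have hof : ENNReal.ofReal (C₁ * (c^γ * w₁^t))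
              = ENNReal.ofReal C₁ * (ENNReal.ofReal (c^γ) * (ENNReal.ofReal w₁)^t) := by
            rw [ENNReal.ofReal_mul hC1pos.le,
              ENNReal.ofReal_mul (by positivity : (0:ℝ) ≤ c^γ),
              ENNReal.ofReal_pow hw1pos.le]
          rw [hof]
          ring
  have hlarge : ∀ t : ℕ, T (-((t:ℤ)+1))
      ≤ (ENNReal.ofReal (c^γ) * (ENNReal.ofReal C₂ * V^(1/q))) * (ENNReal.ofReal w₂)^t := by
    intro t
    have hρj := hρpos (-((t:ℤ)+1))
    have hm1 : (min 1 (ENNReal.ofReal (c * (2*ρ (-((t:ℤ)+1)))^s)))^(1/p) ≤ 1 := by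
      calc (min 1 (ENNReal.ofReal (c * (2*ρ (-((t:ℤ)+1)))^s)))^(1/p)
          ≤ (1:ℝ≥0∞)^(1/p) := ENNReal.rpow_le_rpow (min_le_left _ _) (by positivity)
        _ = 1 := ENNReal.one_rpow _
    have hB : (ENNReal.ofReal ((2*ρ (-((t:ℤ)+1)))^(n:ℝ)) * V)^(1/q)
        = ENNReal.ofReal (((2*ρ (-((t:ℤ)+1)))^(n:ℝ))^(1/q)) * V^(1/q) := by
      rw [ENNReal.mul_rpow_of_nonneg _ _ (by positivity),
        ENNReal.ofReal_rpow_of_nonneg (by positivity) (by positivity)]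
    calc T (-((t:ℤ)+1))
        ≤ ENNReal.ofReal ((ρ (-((t:ℤ)+1))/2)^(α-(n:ℝ)))
            * (ENNReal.ofReal (((2*ρ (-((t:ℤ)+1)))^(n:ℝ))^(1/q)) * V^(1/q)) := by
          simp only [hTdef]
          rw [hB]
          calc ENNReal.ofReal ((ρ (-((t:ℤ)+1)) / 2) ^ (α - (n:ℝ)))
              * ((min 1 (ENNReal.ofReal (c * (2 * ρ (-((t:ℤ)+1))) ^ s))) ^ (1/p)
                * (ENNReal.ofReal (((2 * ρ (-((t:ℤ)+1))) ^ (n:ℝ))^(1/q)) * V ^ (1/q)))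
              ≤ ENNReal.ofReal ((ρ (-((t:ℤ)+1)) / 2) ^ (α - (n:ℝ)))
              * (1 * (ENNReal.ofReal (((2 * ρ (-((t:ℤ)+1))) ^ (n:ℝ))^(1/q)) * V ^ (1/q))) :=
                mul_le_mul_right (mul_le_mul' hm1 le_rfl) _
            _ = _ := by rw [one_mul]
      _ = ENNReal.ofReal ((ρ (-((t:ℤ)+1))/2)^(α-(n:ℝ))
            * ((2*ρ (-((t:ℤ)+1)))^(n:ℝ))^(1/q)) * V^(1/q) := by
          rw [ENNReal.ofReal_mul (by positivity)]
          ring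
      _ = ENNReal.ofReal (C₂ * (c^γ * w₂^t)) * V^(1/q) := by
          rw [idgen2 _ hρj, hρl t, ← hc2, hC2def]
          ring_nf
      _ = (ENNReal.ofReal (c^γ) * (ENNReal.ofReal C₂ * V^(1/q))) * (ENNReal.ofReal w₂)^t := by
          have hof : ENNReal.ofReal (C₂ * (c^γ * w₂^t))
              = ENNReal.ofReal C₂ * (ENNReal.ofReal (c^γ) * (ENNReal.ofReal w₂)^t) := by
            rw [ENNReal.ofReal_mul hC2pos.le,
              ENNReal.ofReal_mul (by positivity : (0:ℝ) ≤ c^γ),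
              ENNReal.ofReal_pow hw2pos.le]
          rw [hof]
          ring
  -- main chain
  have hgeo1 : (∑' t : ℕ, (ENNReal.ofReal w₁)^t) = (1 - ENNReal.ofReal w₁)⁻¹ :=
    ENNReal.tsum_geometric _
  have hgeo2 : (∑' t : ℕ, (ENNReal.ofReal w₂)^t) = (1 - ENNReal.ofReal w₂)⁻¹ :=
    ENNReal.tsum_geometric _
  have hmain : (∫⁻ x, (∫⁻ y, K x y ∂μ) ^ q) ^ (1/q) ≤ ENNReal.ofReal (c^γ) * KK := by
    calc (∫⁻ x, (∫⁻ y, K x y ∂μ) ^ q) ^ (1/q)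
        = (∫⁻ x, (∑' j : ℤ, G j x) ^ q) ^ (1/q) := by
          congr 1
          exact lintegral_congr fun x => by rw [hdecomp x]
      _ ≤ ∑' j : ℤ, (∫⁻ x, (G j x) ^ q) ^ (1/q) := my_tsum_minkowski volume G hGmeas hq1.le
      _ ≤ ∑' j : ℤ, T j := ENNReal.tsum_le_tsum hTj
      _ = (∑' t : ℕ, T ((t:ℤ))) + ∑' t : ℕ, T (-((t:ℤ)+1)) :=
          tsum_of_nat_of_neg_add_one ENNReal.summable ENNReal.summable
      _ ≤ (ENNReal.ofReal (c^γ) * (ENNReal.ofReal C₁ * V^(1/q))) * (1 - ENNReal.ofReal w₁)⁻¹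
          + (ENNReal.ofReal (c^γ) * (ENNReal.ofReal C₂ * V^(1/q))) * (1 - ENNReal.ofReal w₂)⁻¹ := by
          refine add_le_add ?_ ?_
          · calc (∑' t : ℕ, T ((t:ℤ)))
                ≤ ∑' t : ℕ, (ENNReal.ofReal (c^γ) * (ENNReal.ofReal C₁ * V^(1/q)))
                    * (ENNReal.ofReal w₁)^t := ENNReal.tsum_le_tsum hsmall
              _ = _ := by rw [ENNReal.tsum_mul_left, hgeo1]
          · calc (∑' t : ℕ, T (-((t:ℤ)+1)))
                ≤ ∑' t : ℕ, (ENNReal.ofReal (c^γ) * (ENNReal.ofReal C₂ * V^(1/q)))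
                    * (ENNReal.ofReal w₂)^t := ENNReal.tsum_le_tsum hlarge
              _ = _ := by rw [ENNReal.tsum_mul_left, hgeo2]
      _ = ENNReal.ofReal (c^γ) * KK := by rw [hKKdef]; ring
  have hKKle : KK ≤ ENNReal.ofReal (KK.toReal + 1) := by
    conv_lhs => rw [← ENNReal.ofReal_toReal hKKtop]
    exact ENNReal.ofReal_le_ofReal (by linarith)
  have hfin : (∫⁻ x, (∫⁻ y, K x y ∂μ) ^ q) ^ (1/q)
      ≤ ENNReal.ofReal ((KK.toReal + 1) * c ^ γ) := by
    refine hmain.trans ?_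
    rw [ENNReal.ofReal_mul (by positivity), mul_comm (ENNReal.ofReal (KK.toReal + 1))]
    exact mul_le_mul_right hKKle _
  simpa only [hKdef] using hfin
end

section
/- Let n ≥ 1 be an integer and q ∈ [1,∞). For all measurable functions G : ℝⁿ → [0,∞] and g : ℝⁿ → [0,∞], and for every x ∈ ℝⁿ, one has M_q(G ∗ g)(x) ≤ (G ∗ M_q g)(x), where (G ∗ g)(x) = ∫_{ℝⁿ} G(z) g(x−z) dz ∈ [0,∞] and M_q h(x) = sup_{r>0} ( ⨍_{B(x,r)} h(y)^q dy )^{1/q} ∈ [0,∞] for a nonnegative measurable h; all integrals and suprema are interpreted in [0,∞]. -/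
open MeasureTheory Metric Set
open scoped ENNReal NNReal

/-- The `L^q`-variant of the centred Hardy–Littlewood maximal function of a
nonnegative (extended-real-valued) function `h` on `ℝⁿ`. -/
noncomputable def maximalFn (n : ℕ) (q : ℝ) (h : EuclideanSpace ℝ (Fin n) → ℝ≥0∞)
    (x : EuclideanSpace ℝ (Fin n)) : ℝ≥0∞ :=
  ⨆ (r : ℝ) (_ : 0 < r),
    ((volume (Metric.ball x r))⁻¹ * ∫⁻ y in Metric.ball x r, h y ^ q) ^ (1 / q)

lemma minkowski_lintegral {α β : Type*} [MeasurableSpace α] [MeasurableSpace β]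
    (μ : Measure α) [IsFiniteMeasure μ] (ν : Measure β) [SigmaFinite ν]
    {q : ℝ} (hq : 1 ≤ q) {F : α → β → ℝ≥0∞} (hF : Measurable (Function.uncurry F)) :
    (∫⁻ y, (∫⁻ z, F y z ∂ν) ^ q ∂μ) ^ (1 / q) ≤
      ∫⁻ z, (∫⁻ y, F y z ^ q ∂μ) ^ (1 / q) ∂ν := by
  have hq0 : 0 < q := lt_of_lt_of_le one_pos hq
  set B : ℝ≥0∞ := ∫⁻ z, (∫⁻ y, F y z ^ q ∂μ) ^ (1 / q) ∂ν with hB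
  have hΦ : Measurable fun y => ∫⁻ z, F y z ∂ν := hF.lintegral_prod_right'
  rcases eq_or_lt_of_le hq with h1 | h1
  · -- q = 1 : Tonelli
    subst h1
    simp only [hB, ENNReal.rpow_one, one_div_one]
    exact le_of_eq (lintegral_lintegral_swap hF.aemeasurable)
  -- q > 1
  have hpq : q.HolderConjugate q.conjExponent := Real.HolderConjugate.conjExponent h1
  set q' := q.conjExponent with hq'
  set Φ : α → ℝ≥0∞ := fun y => ∫⁻ z, F y z ∂ν with hΦdef
  have key : ∀ m : ℕ, (∫⁻ y, (min (Φ y) m) ^ q ∂μ) ^ (1 / q) ≤ B := by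
    intro m
    set Φm : α → ℝ≥0∞ := fun y => min (Φ y) m with hΦm
    have hΦm_meas : Measurable Φm := hΦ.min measurable_const
    set I : ℝ≥0∞ := ∫⁻ y, Φm y ^ q ∂μ with hI
    have hI_top : I ≠ ∞ := by
      have hle : I ≤ (m : ℝ≥0∞) ^ q * μ Set.univ := by
        rw [hI, ← lintegral_const]
        exact lintegral_mono fun y => ENNReal.rpow_le_rpow (min_le_right _ _) hq0.le
      exact ne_top_of_le_ne_top (ENNReal.mul_ne_top
        (ENNReal.rpow_ne_top_of_nonneg hq0.le (by simp)) (measure_ne_top μ _)) hle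
    rcases eq_or_ne I 0 with hI0 | hI0
    · rw [hI0, ENNReal.zero_rpow_of_pos (one_div_pos.2 hq0)]; exact zero_le
    have hmq1 : ∀ y, Φm y ^ (q - 1) ≠ ∞ := fun y =>
      ENNReal.rpow_ne_top_of_nonneg (by linarith) (ne_top_of_le_ne_top (by simp) (min_le_right _ _))
    have step1 : I ≤ ∫⁻ z, ∫⁻ y, Φm y ^ (q - 1) * F y z ∂μ ∂ν := by
      calc I ≤ ∫⁻ y, Φm y ^ (q - 1) * Φ y ∂μ := by
              refine lintegral_mono fun y => ?_
              have : Φm y ^ q = Φm y ^ (q - 1) * Φm y ^ (1 : ℝ) := by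
                rw [← ENNReal.rpow_add_of_nonneg _ _ (by linarith) zero_le_one]
                ring_nf
              rw [this, ENNReal.rpow_one]
              exact mul_le_mul_right (min_le_left _ _) _
        _ = ∫⁻ y, ∫⁻ z, Φm y ^ (q - 1) * F y z ∂ν ∂μ := by
              refine lintegral_congr fun y => ?_
              rw [lintegral_const_mul' _ _ (hmq1 y)]
        _ = ∫⁻ z, ∫⁻ y, Φm y ^ (q - 1) * F y z ∂μ ∂ν := by
              refine lintegral_lintegral_swap ?_
              exact (((hΦm_meas.comp measurable_fst).pow_const _).mul hF).aemeasurable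
    have step2 : ∀ z, ∫⁻ y, Φm y ^ (q - 1) * F y z ∂μ ≤
        I ^ (1 / q') * (∫⁻ y, F y z ^ q ∂μ) ^ (1 / q) := by
      intro z
      have h := ENNReal.lintegral_mul_le_Lp_mul_Lq μ hpq.symm
        ((hΦm_meas.pow_const (q - 1)).aemeasurable)
        ((hF.comp (measurable_id.prodMk measurable_const)).aemeasurable : AEMeasurable (fun y => F y z) μ)
      have heq : (∫⁻ y, (Φm y ^ (q - 1)) ^ q' ∂μ) = I := by
        rw [hI]
        refine lintegral_congr fun y => ?_
        rw [← ENNReal.rpow_mul, hpq.sub_one_mul_conj]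
      have h2 : ∫⁻ y, Φm y ^ (q - 1) * F y z ∂μ ≤
          (∫⁻ y, (Φm y ^ (q - 1)) ^ q' ∂μ) ^ (1 / q') *
            (∫⁻ y, F y z ^ q ∂μ) ^ (1 / q) := h
      rwa [heq] at h2
    have main : I ≤ I ^ (1 / q') * B := by
      refine step1.trans ?_
      calc ∫⁻ z, ∫⁻ y, Φm y ^ (q - 1) * F y z ∂μ ∂ν
          ≤ ∫⁻ z, I ^ (1 / q') * (∫⁻ y, F y z ^ q ∂μ) ^ (1 / q) ∂ν :=
            lintegral_mono step2
        _ = I ^ (1 / q') * B := by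
            rw [hB, lintegral_const_mul' _ _
              (ENNReal.rpow_ne_top_of_nonneg (one_div_nonneg.2 hpq.symm.pos.le) hI_top)]
    -- cancel
    have hIq' : I ^ (1 / q') ≠ 0 := by
      rw [Ne, ENNReal.rpow_eq_zero_iff]
      rintro (⟨h, -⟩ | ⟨h, -⟩)
      exacts [hI0 h, hI_top h]
    have hIq't : I ^ (1 / q') ≠ ∞ :=
      ENNReal.rpow_ne_top_of_nonneg (one_div_nonneg.2 hpq.symm.pos.le) hI_top
    have hsplit : I = I ^ (1 / q') * I ^ (1 / q) := by
      rw [← ENNReal.rpow_add _ _ hI0 hI_top,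
        show (1 : ℝ) / q' + 1 / q = 1 from by
          rw [one_div, one_div, add_comm]; exact hpq.inv_add_inv_eq_one,
        ENNReal.rpow_one]
    have main2 : I ^ (1 / q') * I ^ (1 / q) ≤ I ^ (1 / q') * B :=
      le_trans (le_of_eq hsplit.symm) main
    exact (ENNReal.mul_le_mul_iff_right hIq' hIq't).mp main2
  -- monotone convergence
  have sup_eq : (∫⁻ y, Φ y ^ q ∂μ) = ⨆ m : ℕ, ∫⁻ y, (min (Φ y) m) ^ q ∂μ := by
    rw [← lintegral_iSup (fun m => (hΦ.min measurable_const).pow_const q)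
      (fun i j hij y => ENNReal.rpow_le_rpow
        (min_le_min le_rfl (by exact_mod_cast Nat.cast_le.2 hij)) hq0.le)]
    refine lintegral_congr fun y => ?_
    have hmin : (⨆ m : ℕ, min (Φ y) (m : ℝ≥0∞)) = Φ y := by
      conv_rhs => rw [← inf_top_eq (Φ y), ← ENNReal.iSup_natCast]
      rw [inf_iSup_eq]
    have hpow : (⨆ m : ℕ, min (Φ y) (m : ℝ≥0∞) ^ q) =
        (⨆ m : ℕ, min (Φ y) (m : ℝ≥0∞)) ^ q := by
      exact (Monotone.map_iSup_of_continuousAt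
        (f := fun t : ℝ≥0∞ => t ^ q) (g := fun m : ℕ => min (Φ y) (m : ℝ≥0∞))
        ENNReal.continuous_rpow_const.continuousAt
        (fun a b hab => ENNReal.rpow_le_rpow hab hq0.le)
        (ENNReal.zero_rpow_of_pos hq0)).symm
    rw [hpow, hmin]
  rw [sup_eq]
  have hBq : (⨆ m : ℕ, ∫⁻ y, (min (Φ y) m) ^ q ∂μ) ≤ B ^ q := by
    refine iSup_le fun m => ?_
    have h := ENNReal.rpow_le_rpow (key m) hq0.le
    rwa [← ENNReal.rpow_mul, one_div, inv_mul_cancel₀ hq0.ne', ENNReal.rpow_one] at h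
  calc (⨆ m : ℕ, ∫⁻ y, (min (Φ y) m) ^ q ∂μ) ^ (1 / q)
      ≤ (B ^ q) ^ (1 / q) := ENNReal.rpow_le_rpow hBq (one_div_nonneg.2 hq0.le)
    _ = B := by rw [← ENNReal.rpow_mul, mul_one_div, div_self hq0.ne', ENNReal.rpow_one]

theorem statement5 (n : ℕ) (hn : 1 ≤ n) (q : ℝ) (hq : 1 ≤ q)
    (G g : EuclideanSpace ℝ (Fin n) → ℝ≥0∞) (hG : Measurable G) (hg : Measurable g)
    (x : EuclideanSpace ℝ (Fin n)) :
    maximalFn n q (fun w => ∫⁻ z, G z * g (w - z)) x ≤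
      ∫⁻ z, G z * maximalFn n q g (x - z) := by
  have hq0 : 0 < q := lt_of_lt_of_le one_pos hq
  refine iSup_le fun r => iSup_le fun hr => ?_
  set B := Metric.ball x r with hBdef
  haveI : IsFiniteMeasure (volume.restrict B) :=
    ⟨by rw [Measure.restrict_apply_univ]; exact measure_ball_lt_top⟩
  have hB0 : volume B ≠ 0 := (measure_ball_pos volume x hr).ne'
  set c : ℝ≥0∞ := (volume B)⁻¹ ^ (1 / q) with hc
  have hc_top : c ≠ ∞ :=
    ENNReal.rpow_ne_top_of_nonneg (one_div_nonneg.2 hq0.le) (ENNReal.inv_ne_top.2 hB0)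
  have huncurry : Measurable (Function.uncurry
      fun (y z : EuclideanSpace ℝ (Fin n)) => G z * g (y - z)) :=
    (hG.comp measurable_snd).mul (hg.comp (measurable_fst.sub measurable_snd))
  have mink := minkowski_lintegral (volume.restrict B) volume hq huncurry
  have htrans : ∀ z : EuclideanSpace ℝ (Fin n),
      (∫⁻ y in B, g (y - z) ^ q) = ∫⁻ y in Metric.ball (x - z) r, g y ^ q := by
    intro z
    rw [← lintegral_indicator measurableSet_ball, ← lintegral_indicator measurableSet_ball,
      ← lintegral_add_right_eq_self
        (fun y => B.indicator (fun w => g (w - z) ^ q) y) z]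
    refine lintegral_congr fun y => ?_
    have hmem : y + z ∈ Metric.ball x r ↔ y ∈ Metric.ball (x - z) r := by
      rw [Metric.mem_ball, Metric.mem_ball, dist_eq_norm, dist_eq_norm,
        show y + z - x = y - (x - z) by abel]
    by_cases hy : y ∈ Metric.ball (x - z) r
    · rw [Set.indicator_of_mem hy, Set.indicator_of_mem (hmem.2 hy), add_sub_cancel_right]
    · rw [Set.indicator_of_notMem hy, Set.indicator_of_notMem (fun h => hy (hmem.1 h))]
  have hvol : ∀ z : EuclideanSpace ℝ (Fin n),
      volume B = volume (Metric.ball (x - z) r) := by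
    intro z
    rw [hBdef, Measure.addHaar_ball_center volume x,
      ← Measure.addHaar_ball_center volume (x - z)]
  calc ((volume B)⁻¹ * ∫⁻ y in B, (∫⁻ z, G z * g (y - z)) ^ q) ^ (1 / q)
      = c * (∫⁻ y in B, (∫⁻ z, G z * g (y - z)) ^ q) ^ (1 / q) :=
        ENNReal.mul_rpow_of_nonneg _ _ (one_div_nonneg.2 hq0.le)
    _ ≤ c * ∫⁻ z, (∫⁻ y in B, (G z * g (y - z)) ^ q) ^ (1 / q) :=
        mul_le_mul_right mink _
    _ = ∫⁻ z, c * (∫⁻ y in B, (G z * g (y - z)) ^ q) ^ (1 / q) :=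
        (lintegral_const_mul' _ _ hc_top).symm
    _ ≤ ∫⁻ z, G z * maximalFn n q g (x - z) := by
        refine lintegral_mono fun z => ?_
        have hmeas : Measurable fun y : EuclideanSpace ℝ (Fin n) => g (y - z) ^ q :=
          (hg.comp (measurable_id.sub measurable_const)).pow_const q
        have h1 : (∫⁻ y in B, (G z * g (y - z)) ^ q)
            = G z ^ q * ∫⁻ y in B, g (y - z) ^ q := by
          rw [show (∫⁻ y in B, (G z * g (y - z)) ^ q)
              = ∫⁻ y in B, G z ^ q * g (y - z) ^ q from
            lintegral_congr fun y => ENNReal.mul_rpow_of_nonneg _ _ hq0.le]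
          exact lintegral_const_mul (G z ^ q) hmeas
        have h2 : (G z ^ q) ^ (1 / q) = G z := by
          rw [← ENNReal.rpow_mul, mul_one_div, div_self hq0.ne', ENNReal.rpow_one]
        rw [h1, ENNReal.mul_rpow_of_nonneg _ _ (one_div_nonneg.2 hq0.le), h2,
          mul_left_comm, hc, ← ENNReal.mul_rpow_of_nonneg _ _ (one_div_nonneg.2 hq0.le),
          htrans z, hvol z]
        refine mul_le_mul_right ?_ _
        exact le_iSup₂ (f := fun (r' : ℝ) (_ : 0 < r') =>
          ((volume (Metric.ball (x - z) r'))⁻¹ *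
            ∫⁻ y in Metric.ball (x - z) r', g y ^ q) ^ (1 / q)) r hr
end

section
/- Let n ≥ 1 be an integer, α ∈ (0,n) and T > 0. Then there exists a constant C > 0, depending only on n, α and T, such that for every x ∈ ℝⁿ and every t with 0 < t ≤ T one has t^α · P_t(x) ≤ C · ∫_{ℝⁿ} G_α(y) P_t(x−y) dy. Consequently, for every measurable g : ℝⁿ → [0,∞], every x ∈ ℝⁿ and every t ∈ (0,T]: t^α · ∫_{ℝⁿ} P_t(x−y) g(y) dy ≤ C · ∫_{ℝⁿ} P_t(x−y) (G_α ∗ g)(y) dy (inequalities in [0,∞]). -/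
open MeasureTheory Metric Set
open scoped ENNReal NNReal

/-- The (unnormalized) Bessel kernel `G_α` on `ℝⁿ`, with values in `[0,∞]`. -/
noncomputable def besselKernel (n : ℕ) (α : ℝ) (x : EuclideanSpace ℝ (Fin n)) : ℝ≥0∞ :=
  ∫⁻ u in Set.Ioi (0 : ℝ),
    ENNReal.ofReal (Real.exp (-(Real.pi * ‖x‖ ^ 2 / u) - u / (4 * Real.pi)) *
      u ^ ((α - n) / 2 - 1))

/-- The (unnormalized) Poisson kernel `P_t` on `ℝⁿ`. -/
noncomputable def poissonKernelEuclid (n : ℕ) (t : ℝ) (x : EuclideanSpace ℝ (Fin n)) : ℝ :=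
  t / (t ^ 2 + ‖x‖ ^ 2) ^ (((n : ℝ) + 1) / 2)

lemma besselKernel_measurable (n : ℕ) (α : ℝ) : Measurable (besselKernel n α) := by
  unfold besselKernel
  have h1 : Measurable fun p : (EuclideanSpace ℝ (Fin n)) × ℝ =>
      ENNReal.ofReal (Real.exp (-(Real.pi * ‖p.1‖ ^ 2 / p.2) - p.2 / (4 * Real.pi)) *
        p.2 ^ ((α - (n:ℝ)) / 2 - 1)) := by
    apply ENNReal.measurable_ofReal.comp
    apply Measurable.mul
    · exact (Real.continuous_exp.measurable).comp (by fun_prop)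
    · exact (by measurability : Measurable fun x : ℝ => x ^ ((α - (n:ℝ)) / 2 - 1)).comp
        measurable_snd
  exact h1.lintegral_prod_right'

lemma poissonKernel_continuous (n : ℕ) {t : ℝ} (ht : 0 < t) :
    Continuous (poissonKernelEuclid n t) := by
  unfold poissonKernelEuclid
  refine continuous_const.div ?_ fun x => ?_
  · exact (Continuous.rpow_const (by continuity) fun x => Or.inr (by positivity))
  · positivity

lemma poissonKernel_pos (n : ℕ) {t : ℝ} (ht : 0 < t) (x : EuclideanSpace ℝ (Fin n)) :
    0 < poissonKernelEuclid n t x := by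
  unfold poissonKernelEuclid
  positivity

lemma bessel_lower (n : ℕ) {α T : ℝ} (hα' : α < n) (hT : 0 < T)
    {y : EuclideanSpace ℝ (Fin n)} (hy0 : y ≠ 0) (hy : ‖y‖ ≤ T) :
    ENNReal.ofReal ((Real.exp (-Real.pi - T ^ 2 / (2 * Real.pi)) * 2 ^ ((α - n) / 2 - 1)) *
      ‖y‖ ^ (α - n)) ≤ besselKernel n α y := by
  set c : ℝ := (α - (n : ℝ)) / 2 - 1 with hc
  have hcneg : c ≤ 0 := by
    have : α - (n : ℝ) < 0 := by linarith
    rw [hc]; linarith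
  have hy' : (0 : ℝ) < ‖y‖ := norm_pos_iff.mpr hy0
  set a : ℝ := ‖y‖ ^ 2 with ha
  have ha0 : 0 < a := by positivity
  have haT : a ≤ T ^ 2 := by
    rw [ha]; nlinarith
  set K : ℝ := Real.exp (-Real.pi - T ^ 2 / (2 * Real.pi)) * (2 * a) ^ c with hK
  have key : ∀ u ∈ Set.Ioc a (2 * a),
      ENNReal.ofReal K ≤
        ENNReal.ofReal (Real.exp (-(Real.pi * ‖y‖ ^ 2 / u) - u / (4 * Real.pi)) * u ^ c) := by
    intro u hu
    obtain ⟨hu1, hu2⟩ := hu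
    have hu0 : 0 < u := ha0.trans hu1
    apply ENNReal.ofReal_le_ofReal
    have h1 : Real.exp (-Real.pi - T ^ 2 / (2 * Real.pi)) ≤
        Real.exp (-(Real.pi * ‖y‖ ^ 2 / u) - u / (4 * Real.pi)) := by
      apply Real.exp_le_exp.mpr
      have e1 : Real.pi * ‖y‖ ^ 2 / u ≤ Real.pi := by
        rw [div_le_iff₀ hu0]
        nlinarith [Real.pi_pos, hu1.le]
      have e2 : u / (4 * Real.pi) ≤ T ^ 2 / (2 * Real.pi) := by
        rw [div_le_div_iff₀ (by positivity) (by positivity)]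
        nlinarith [Real.pi_pos]
      linarith
    have h2 : (2 * a) ^ c ≤ u ^ c := Real.rpow_le_rpow_of_nonpos hu0 hu2 hcneg
    exact mul_le_mul h1 h2 (Real.rpow_nonneg (by positivity) _) (Real.exp_nonneg _)
  have habs : Real.exp (-Real.pi - T ^ 2 / (2 * Real.pi)) * 2 ^ ((α - n) / 2 - 1) *
      ‖y‖ ^ (α - n) = K * a := by
    rw [hK, Real.mul_rpow (by norm_num) ha0.le]
    have h1 : a ^ c * a = ‖y‖ ^ (α - (n : ℝ)) := by
      have h2 : a = ‖y‖ ^ (2 : ℝ) := by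
        rw [ha, ← Real.rpow_natCast ‖y‖ 2]; norm_num
      rw [h2, ← Real.rpow_mul (norm_nonneg y), ← Real.rpow_add hy']
      congr 1
      rw [hc]; push_cast; ring
    rw [← h1, ← hc]; ring
  rw [habs]
  calc ENNReal.ofReal (K * a) = ENNReal.ofReal K * ENNReal.ofReal a := by
        rw [ENNReal.ofReal_mul]
        positivity
    _ = ∫⁻ _ in Set.Ioc a (2 * a), ENNReal.ofReal K := by
        rw [setLIntegral_const, Real.volume_Ioc]
        congr 1
        rw [two_mul]; ring_nf
    _ ≤ ∫⁻ u in Set.Ioc a (2 * a),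
        ENNReal.ofReal (Real.exp (-(Real.pi * ‖y‖ ^ 2 / u) - u / (4 * Real.pi)) * u ^ c) := by
        refine setLIntegral_mono (ENNReal.measurable_ofReal.comp
          (((Real.continuous_exp.measurable).comp (by fun_prop)).mul
            (by measurability))) key
    _ ≤ besselKernel n α y := by
        unfold besselKernel
        exact lintegral_mono_set fun u hu => ha0.trans hu.1

lemma poisson_lower (n : ℕ) {t : ℝ} (ht : 0 < t) (x y : EuclideanSpace ℝ (Fin n))
    (hy : ‖y‖ ≤ t) :
    (3 : ℝ) ^ (-(((n : ℝ) + 1) / 2)) * poissonKernelEuclid n t x ≤ poissonKernelEuclid n t (x - y) := by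
  set p : ℝ := ((n : ℝ) + 1) / 2 with hp
  have hp0 : 0 ≤ p := by positivity
  have hA : (0 : ℝ) < t ^ 2 + ‖x - y‖ ^ 2 := by positivity
  have hB : (0 : ℝ) < t ^ 2 + ‖x‖ ^ 2 := by positivity
  have h1 : t ^ 2 + ‖x - y‖ ^ 2 ≤ 3 * (t ^ 2 + ‖x‖ ^ 2) := by
    have h := norm_sub_le x y
    nlinarith [norm_nonneg x, norm_nonneg y, norm_nonneg (x - y),
      mul_self_le_mul_self (norm_nonneg (x - y)) h,
      mul_self_le_mul_self (norm_nonneg y) hy, sq_nonneg (‖x‖ - ‖y‖)]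
  have h2 : (t ^ 2 + ‖x - y‖ ^ 2) ^ p ≤ 3 ^ p * (t ^ 2 + ‖x‖ ^ 2) ^ p := by
    rw [← Real.mul_rpow (by norm_num) hB.le]
    exact Real.rpow_le_rpow hA.le h1 hp0
  unfold poissonKernelEuclid
  rw [Real.rpow_neg (by norm_num : (0:ℝ) ≤ 3), ← hp, inv_mul_eq_div, div_div, mul_comm]
  exact div_le_div_of_nonneg_left ht.le (by positivity) h2

noncomputable def mainC (n : ℕ) (α T : ℝ) : ℝ :=
  (Real.exp (-Real.pi - T ^ 2 / (2 * Real.pi)) * 2 ^ ((α - n) / 2 - 1) *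
    ((3 : ℝ) ^ (-(((n : ℝ) + 1) / 2)) *
      (volume (ball (0 : EuclideanSpace ℝ (Fin n)) 1)).toReal))⁻¹

lemma volume_ball_one_pos (n : ℕ) :
    0 < (volume (ball (0 : EuclideanSpace ℝ (Fin n)) 1)).toReal :=
  ENNReal.toReal_pos (measure_ball_pos _ _ one_pos).ne' measure_ball_lt_top.ne

lemma mainC_pos (n : ℕ) (α T : ℝ) : 0 < mainC n α T := by
  unfold mainC
  have := volume_ball_one_pos n
  positivity

lemma main_pointwise (n : ℕ) (hn : 1 ≤ n) (α T : ℝ) (hα' : α < n) (hT : 0 < T)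
    (x : EuclideanSpace ℝ (Fin n)) (t : ℝ) (ht : 0 < t) (htT : t ≤ T) :
    ENNReal.ofReal (t ^ α * poissonKernelEuclid n t x) ≤
      ENNReal.ofReal (mainC n α T) *
        ∫⁻ y, besselKernel n α y * ENNReal.ofReal (poissonKernelEuclid n t (x - y)) := by
  haveI : Nonempty (Fin n) := ⟨⟨0, hn⟩⟩
  have hne : EuclideanSpace.single (⟨0, hn⟩ : Fin n) (1 : ℝ) ≠ 0 := by
    intro h
    have h2 := congrArg norm h
    rw [EuclideanSpace.norm_single, norm_zero] at h2
    norm_num at h2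
  haveI : Nontrivial (EuclideanSpace ℝ (Fin n)) := ⟨_, 0, hne⟩
  have h0 : ∀ᵐ (y : EuclideanSpace ℝ (Fin n)), y ≠ 0 := by
    refine ae_iff.mpr ?_
    simpa using measure_singleton (0 : EuclideanSpace ℝ (Fin n))
  have hP : 0 < poissonKernelEuclid n t x := poissonKernel_pos n ht x
  set c1 : ℝ := Real.exp (-Real.pi - T ^ 2 / (2 * Real.pi)) * 2 ^ ((α - (n : ℝ)) / 2 - 1)
    with hc1
  set c2 : ℝ := (3 : ℝ) ^ (-(((n : ℝ) + 1) / 2)) with hc2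
  have hc1pos : 0 < c1 := by positivity
  have hc2pos : 0 < c2 := by positivity
  set V : ℝ := (volume (ball (0 : EuclideanSpace ℝ (Fin n)) 1)).toReal with hV
  have hVpos : 0 < V := volume_ball_one_pos n
  set I : ℝ≥0∞ := ∫⁻ y, besselKernel n α y * ENNReal.ofReal (poissonKernelEuclid n t (x - y)) with hI
  have step : ENNReal.ofReal (c1 * t ^ (α - (n : ℝ)) * (c2 * poissonKernelEuclid n t x)) *
      volume (ball (0 : EuclideanSpace ℝ (Fin n)) t) ≤ I := by
    rw [← setLIntegral_const (ball (0 : EuclideanSpace ℝ (Fin n)) t)]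
    refine le_trans (setLIntegral_mono_ae ?_ ?_) (setLIntegral_le_lintegral _ _)
    · exact ((besselKernel_measurable n α).mul
        (ENNReal.measurable_ofReal.comp
          ((poissonKernel_continuous n ht).measurable.comp
            (measurable_const.sub measurable_id)))).aemeasurable
    · filter_upwards [h0] with y hy0 hyball
      have hynorm : ‖y‖ ≤ t := (mem_ball_zero_iff.mp hyball).le
      have b1 : ENNReal.ofReal (c1 * t ^ (α - (n : ℝ))) ≤ besselKernel n α y := by
        refine le_trans ?_ (bessel_lower n hα' hT hy0 (hynorm.trans htT))
        apply ENNReal.ofReal_le_ofReal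
        apply mul_le_mul_of_nonneg_left ?_ hc1pos.le
        exact Real.rpow_le_rpow_of_nonpos (norm_pos_iff.mpr hy0) hynorm
          (by linarith : α - (n : ℝ) ≤ 0)
      have b2 : ENNReal.ofReal (c2 * poissonKernelEuclid n t x) ≤
          ENNReal.ofReal (poissonKernelEuclid n t (x - y)) :=
        ENNReal.ofReal_le_ofReal (poisson_lower n ht x y hynorm)
      calc ENNReal.ofReal (c1 * t ^ (α - (n : ℝ)) * (c2 * poissonKernelEuclid n t x))
          = ENNReal.ofReal (c1 * t ^ (α - (n : ℝ))) *
              ENNReal.ofReal (c2 * poissonKernelEuclid n t x) := by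
            rw [ENNReal.ofReal_mul (by positivity)]
        _ ≤ _ := mul_le_mul' b1 b2
  have hball : volume (ball (0 : EuclideanSpace ℝ (Fin n)) t) =
      ENNReal.ofReal (t ^ (n : ℕ)) * ENNReal.ofReal V := by
    rw [Measure.addHaar_ball volume (0 : EuclideanSpace ℝ (Fin n)) ht.le,
      finrank_euclideanSpace_fin, hV, ENNReal.ofReal_toReal measure_ball_lt_top.ne]
  have ht' : t ^ (α - (n : ℝ)) * t ^ (n : ℕ) = t ^ α := by
    rw [← Real.rpow_natCast t n, ← Real.rpow_add ht]
    norm_num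
  have big : ENNReal.ofReal (c1 * c2 * V * (t ^ α * poissonKernelEuclid n t x)) ≤ I := by
    refine le_trans (le_of_eq ?_) step
    rw [hball, ← ENNReal.ofReal_mul (by positivity : (0 : ℝ) ≤ t ^ (n : ℕ)),
      ← ENNReal.ofReal_mul (mul_nonneg (by positivity) (mul_nonneg hc2pos.le hP.le))]
    congr 1
    rw [← ht']
    ring
  have hkey : mainC n α T * (c1 * c2 * V * (t ^ α * poissonKernelEuclid n t x)) =
      t ^ α * poissonKernelEuclid n t x := by
    have : mainC n α T = (c1 * (c2 * V))⁻¹ := by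
      unfold mainC
      rw [← hc1, ← hc2, ← hV]
    rw [this]
    field_simp
  calc ENNReal.ofReal (t ^ α * poissonKernelEuclid n t x)
      = ENNReal.ofReal (mainC n α T) *
          ENNReal.ofReal (c1 * c2 * V * (t ^ α * poissonKernelEuclid n t x)) := by
        rw [← ENNReal.ofReal_mul (mainC_pos n α T).le, hkey]
    _ ≤ ENNReal.ofReal (mainC n α T) * I := mul_le_mul_right big _

theorem statement6 (n : ℕ) (hn : 1 ≤ n) (α T : ℝ) (hα : 0 < α) (hα' : α < n) (hT : 0 < T) :
    ∃ C : ℝ, 0 < C ∧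
      (∀ (x : EuclideanSpace ℝ (Fin n)) (t : ℝ), 0 < t → t ≤ T →
        ENNReal.ofReal (t ^ α * poissonKernelEuclid n t x) ≤
          ENNReal.ofReal C *
            ∫⁻ y, besselKernel n α y * ENNReal.ofReal (poissonKernelEuclid n t (x - y))) ∧
      ∀ g : EuclideanSpace ℝ (Fin n) → ℝ≥0∞, Measurable g →
        ∀ (x : EuclideanSpace ℝ (Fin n)) (t : ℝ), 0 < t → t ≤ T →
          ENNReal.ofReal (t ^ α) * ∫⁻ y, ENNReal.ofReal (poissonKernelEuclid n t (x - y)) * g y ≤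
            ENNReal.ofReal C *
              ∫⁻ y, ENNReal.ofReal (poissonKernelEuclid n t (x - y)) *
                (∫⁻ z, besselKernel n α (y - z) * g z) := by
  refine ⟨mainC n α T, mainC_pos n α T,
    fun x t ht htT => main_pointwise n hn α T hα' hT x t ht htT, ?_⟩
  intro g hg x t ht htT
  have mG : Measurable (besselKernel n α) := besselKernel_measurable n α
  have mPc : Measurable fun y : EuclideanSpace ℝ (Fin n) =>
      ENNReal.ofReal (poissonKernelEuclid n t (x - y)) :=
    ENNReal.measurable_ofReal.comp ((poissonKernel_continuous n ht).measurable.comp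
      (measurable_const.sub measurable_id))
  have hta : (0 : ℝ) ≤ t ^ α := Real.rpow_nonneg ht.le α
  rw [← lintegral_const_mul' _ _ ENNReal.ofReal_ne_top]
  have stepA : ∀ y, ENNReal.ofReal (t ^ α) *
      (ENNReal.ofReal (poissonKernelEuclid n t (x - y)) * g y)
      = ENNReal.ofReal (t ^ α * poissonKernelEuclid n t (x - y)) * g y := fun y => by
    rw [ENNReal.ofReal_mul hta, mul_assoc]
  simp_rw [stepA]
  have stepB : ∀ y, ENNReal.ofReal (t ^ α * poissonKernelEuclid n t (x - y)) * g y ≤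
      (ENNReal.ofReal (mainC n α T) *
        ∫⁻ z, besselKernel n α z * ENNReal.ofReal (poissonKernelEuclid n t (x - y - z))) * g y :=
    fun y => mul_le_mul_left (main_pointwise n hn α T hα' hT (x - y) t ht htT) _
  refine le_trans (lintegral_mono stepB) ?_
  simp_rw [mul_assoc]
  rw [lintegral_const_mul' _ _ ENNReal.ofReal_ne_top]
  apply mul_le_mul_right
  refine le_of_eq (Eq.symm ?_)
  show (∫⁻ y, ENNReal.ofReal (poissonKernelEuclid n t (x - y)) *
      ∫⁻ z, besselKernel n α (y - z) * g z) =
    ∫⁻ y, (∫⁻ z, besselKernel n α z *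
      ENNReal.ofReal (poissonKernelEuclid n t (x - y - z))) * g y
  set F : EuclideanSpace ℝ (Fin n) → EuclideanSpace ℝ (Fin n) → ℝ≥0∞ := fun y z =>
    ENNReal.ofReal (poissonKernelEuclid n t (x - y)) * (besselKernel n α (y - z) * g z) with hF
  have mF : Measurable (Function.uncurry F) := by
    apply Measurable.mul
    · exact mPc.comp measurable_fst
    · exact (mG.comp (measurable_fst.sub measurable_snd)).mul (hg.comp measurable_snd)
  calc ∫⁻ y, ENNReal.ofReal (poissonKernelEuclid n t (x - y)) *
        ∫⁻ z, besselKernel n α (y - z) * g z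
      = ∫⁻ y, ∫⁻ z, F y z := by
        congr 1; funext y
        rw [← lintegral_const_mul' _ _ ENNReal.ofReal_ne_top]
    _ = ∫⁻ z, ∫⁻ y, F y z := lintegral_lintegral_swap mF.aemeasurable
    _ = ∫⁻ z, ∫⁻ y, besselKernel n α y *
          ENNReal.ofReal (poissonKernelEuclid n t (x - z - y)) * g z := by
        congr 1; funext z
        rw [← lintegral_add_right_eq_self (fun y => F y z) z]
        congr 1; funext y
        have h1 : y + z - z = y := add_sub_cancel_right y z
        have h2 : x - (y + z) = x - z - y := by abel
        rw [hF]
        simp only [h1, h2]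
        ring
    _ = ∫⁻ z, (∫⁻ y, besselKernel n α y *
          ENNReal.ofReal (poissonKernelEuclid n t (x - z - y))) * g z := by
        congr 1; funext z
        have mPz : Measurable fun y : EuclideanSpace ℝ (Fin n) =>
            besselKernel n α y * ENNReal.ofReal (poissonKernelEuclid n t (x - z - y)) :=
          mG.mul (ENNReal.measurable_ofReal.comp
            ((poissonKernel_continuous n ht).measurable.comp
              (measurable_const.sub measurable_id)))
        rw [lintegral_mul_const _ mPz]
    _ = ∫⁻ y, (∫⁻ z, besselKernel n α z *
          ENNReal.ofReal (poissonKernelEuclid n t (x - y - z))) * g y := rfl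
end

section
/- Let n ≥ 1 be an integer and α ∈ (0,n). Then there exists a constant C > 0, depending only on n and α, such that for every x ∈ ℝⁿ with x ≠ 0 one has G_α(x) ≤ C · |x|^{α−n} · exp(−|x|/2); moreover G_α is differentiable on ℝⁿ \ {0} and its derivative satisfies ‖DG_α(x)‖ ≤ C · |x|^{α−n−1} · exp(−|x|/2) for every x ≠ 0. -/
open MeasureTheory Metric Set
open scoped ENNReal NNReal



lemma aux_exp_le {c u : ℝ} (hc : 0 < c) (hu : 0 < u) (k : ℕ) :
    Real.exp (-(c / u)) ≤ (k.factorial : ℝ) / c ^ k * u ^ k := by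
  have h1 : (0:ℝ) < c / u := by positivity
  have h := Real.pow_div_factorial_le_exp (x := c / u) h1.le k
  have h2 : (0:ℝ) < (c / u) ^ k / (k.factorial : ℝ) := by positivity
  rw [Real.exp_neg]
  calc (Real.exp (c / u))⁻¹ ≤ ((c / u) ^ k / (k.factorial : ℝ))⁻¹ := by
        exact inv_anti₀ h2 h
    _ = (k.factorial : ℝ) / c ^ k * u ^ k := by
        rw [div_pow]
        field_simp

lemma aux_cont {c t : ℝ} :
    ContinuousOn (fun u : ℝ => Real.exp (-(c / u)) * u ^ t) (Ioi (0:ℝ)) := by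
  apply ContinuousOn.mul
  · apply Real.continuous_exp.comp_continuousOn
    apply ContinuousOn.neg
    exact continuousOn_const.div continuousOn_id (fun u hu => ne_of_gt hu)
  · exact fun u hu => (Real.continuousAt_rpow_const u t (Or.inl (ne_of_gt hu))).continuousWithinAt

lemma aux_integrable {c t : ℝ} (hc : 0 < c) (ht : t < -1) :
    IntegrableOn (fun u : ℝ => Real.exp (-(c / u)) * u ^ t) (Ioi (0:ℝ)) := by
  have hmeas : ∀ s : Set ℝ, s ⊆ Ioi 0 → MeasurableSet s →
      AEStronglyMeasurable (fun u : ℝ => Real.exp (-(c / u)) * u ^ t)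
        (volume.restrict s) := fun s hs hms =>
    (aux_cont.mono hs).aestronglyMeasurable hms
  have h01 : IntegrableOn (fun u : ℝ => Real.exp (-(c / u)) * u ^ t) (Ioc (0:ℝ) 1) := by
    set k : ℕ := ⌈-t⌉₊ with hk
    have hkt : -t ≤ (k : ℝ) := Nat.le_ceil _
    apply Integrable.mono'
      ((integrableOn_const_iff (C := (k.factorial : ℝ) / c ^ k)).mpr (Or.inr measure_Ioc_lt_top))
      (hmeas _ (fun u hu => hu.1) measurableSet_Ioc)
    · rw [ae_restrict_iff' measurableSet_Ioc]
      filter_upwards with u hu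
      have hu0 : 0 < u := hu.1
      have h1 : Real.exp (-(c / u)) * u ^ t ≤ (k.factorial : ℝ) / c ^ k * u ^ k * u ^ t := by
        apply mul_le_mul_of_nonneg_right (aux_exp_le hc hu0 k)
        positivity
      have h2 : u ^ k * u ^ t = u ^ ((k : ℝ) + t) := by
        rw [Real.rpow_add hu0, Real.rpow_natCast]
      have h3 : u ^ ((k : ℝ) + t) ≤ 1 :=
        Real.rpow_le_one hu0.le hu.2 (by linarith)
      have h4 : (0:ℝ) ≤ Real.exp (-(c / u)) * u ^ t := by positivity
      rw [Real.norm_eq_abs, abs_of_nonneg h4]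
      calc Real.exp (-(c / u)) * u ^ t
          ≤ (k.factorial : ℝ) / c ^ k * (u ^ k * u ^ t) := by linarith [h1]
        _ = (k.factorial : ℝ) / c ^ k * u ^ ((k : ℝ) + t) := by rw [h2]
        _ ≤ (k.factorial : ℝ) / c ^ k * 1 := by
            apply mul_le_mul_of_nonneg_left h3; positivity
        _ = (k.factorial : ℝ) / c ^ k := mul_one _
  have h1i : IntegrableOn (fun u : ℝ => Real.exp (-(c / u)) * u ^ t) (Ioi (1:ℝ)) := by
    apply Integrable.mono' (integrableOn_Ioi_rpow_of_lt ht one_pos)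
      (hmeas _ (fun u hu => mem_Ioi.mpr (lt_trans one_pos (mem_Ioi.mp hu))) measurableSet_Ioi)
    rw [ae_restrict_iff' measurableSet_Ioi]
    filter_upwards with u hu
    have hu0 : (0:ℝ) < u := lt_trans one_pos hu
    have h4 : (0:ℝ) ≤ Real.exp (-(c / u)) * u ^ t := by positivity
    rw [Real.norm_eq_abs, abs_of_nonneg h4]
    calc Real.exp (-(c / u)) * u ^ t ≤ 1 * u ^ t := by
          apply mul_le_mul_of_nonneg_right _ (by positivity)
          rw [Real.exp_le_one_iff]
          have : 0 < c / u := by positivity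
          linarith
      _ = u ^ t := one_mul _
  have := h01.union h1i
  rwa [Ioc_union_Ioi_eq_Ioi zero_le_one] at this


lemma aux_scale {d t : ℝ} {r : ℝ} (hr : 0 < r) :
    ∫ u in Ioi (0:ℝ), Real.exp (-(d * r ^ 2 / u)) * u ^ t
      = r ^ (2 * t + 2) * ∫ v in Ioi (0:ℝ), Real.exp (-(d / v)) * v ^ t := by
  have hr2 : (0:ℝ) < r ^ 2 := by positivity
  have h := integral_comp_mul_left_Ioi
    (fun u : ℝ => Real.exp (-(d * r ^ 2 / u)) * u ^ t) 0 hr2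
  rw [mul_zero] at h
  have h2 : ∀ v ∈ Ioi (0:ℝ),
      Real.exp (-(d * r ^ 2 / (r ^ 2 * v))) * (r ^ 2 * v) ^ t
        = (r ^ 2) ^ t * (Real.exp (-(d / v)) * v ^ t) := by
    intro v hv
    have hv0 : (0:ℝ) < v := hv
    have e1 : d * r ^ 2 / (r ^ 2 * v) = d / v := by
      field_simp
    rw [e1, Real.mul_rpow hr2.le hv0.le]
    ring
  rw [setIntegral_congr_fun measurableSet_Ioi h2, integral_const_mul _ _] at h
  have e2 : ∫ u in Ioi (0:ℝ), Real.exp (-(d * r ^ 2 / u)) * u ^ t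
      = r ^ 2 * ((r ^ 2) ^ t * ∫ v in Ioi (0:ℝ), Real.exp (-(d / v)) * v ^ t) := by
    have h' := h.symm
    rw [inv_smul_eq_iff₀ (ne_of_gt hr2), smul_eq_mul] at h'
    exact h'
  rw [e2]
  have e3 : (r ^ 2 : ℝ) ^ t = r ^ (2 * t) := by
    rw [← Real.rpow_natCast r 2, ← Real.rpow_mul hr.le]
    norm_num
  have e4 : (r : ℝ) ^ 2 = r ^ (2:ℝ) := by
    rw [← Real.rpow_natCast r 2]; norm_num
  rw [e3, e4, ← mul_assoc, ← Real.rpow_add hr]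
  ring_nf

lemma aux_amgm {r u : ℝ} (hr : 0 < r) (hu : 0 < u) :
    -(Real.pi * r ^ 2 / u) - u / (4 * Real.pi)
      ≤ -(r / 2) + -(Real.pi / 2 * r ^ 2 / u) := by
  have hπ := Real.pi_pos
  have key : r / 2 ≤ Real.pi / 2 * r ^ 2 / u + u / (4 * Real.pi) := by
    have h4 : Real.pi / 2 * r ^ 2 / u + u / (4 * Real.pi) - r / 2
        = (2 * Real.pi ^ 2 * r ^ 2 + u ^ 2 - 2 * Real.pi * r * u) / (4 * Real.pi * u) := by
      field_simp
      ring
    have h5 : 0 ≤ (2 * Real.pi ^ 2 * r ^ 2 + u ^ 2 - 2 * Real.pi * r * u)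
        / (4 * Real.pi * u) := by
      apply div_nonneg _ (by positivity)
      nlinarith [sq_nonneg (Real.pi * r - u), sq_nonneg (Real.pi * r)]
    linarith
  have e : Real.pi * r ^ 2 / u = Real.pi / 2 * r ^ 2 / u + Real.pi / 2 * r ^ 2 / u := by
    ring
  rw [e]
  linarith

lemma aux_pt {r u : ℝ} (hr : 0 < r) (hu : 0 < u) :
    Real.exp (-(Real.pi * r ^ 2 / u) - u / (4 * Real.pi))
      ≤ Real.exp (-(r / 2)) * Real.exp (-(Real.pi / 2 * r ^ 2 / u)) := by
  rw [← Real.exp_add]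
  exact Real.exp_le_exp.mpr (aux_amgm hr hu)


set_option maxHeartbeats 1600000 in
set_option synthInstance.maxHeartbeats 400000 in
theorem statement7 (n : ℕ) (hn : 1 ≤ n) (α : ℝ) (hα : 0 < α) (hα' : α < n) :
    ∃ C : ℝ, 0 < C ∧
      ∀ x : EuclideanSpace ℝ (Fin n), x ≠ 0 →
        besselKernel n α x ≤ ENNReal.ofReal (C * ‖x‖ ^ (α - n) * Real.exp (-‖x‖ / 2)) ∧
        DifferentiableAt ℝ (fun y => (besselKernel n α y).toReal) x ∧
        ‖fderiv ℝ (fun y => (besselKernel n α y).toReal) x‖ ≤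
          C * ‖x‖ ^ (α - n - 1) * Real.exp (-‖x‖ / 2) := by
  have hπ := Real.pi_pos
  set s : ℝ := (α - n) / 2 - 1 with hs_def
  have hαn : α - (n : ℝ) < 0 := by
    have h : (α : ℝ) < n := hα'
    linarith
  have hs : s < -1 := by rw [hs_def]; linarith
  have hs1 : s - 1 < -1 := by linarith
  set I₀ : ℝ := ∫ v in Ioi (0:ℝ), Real.exp (-(Real.pi / 2 / v)) * v ^ s with hI₀
  set I₁ : ℝ := ∫ v in Ioi (0:ℝ), Real.exp (-(Real.pi / 2 / v)) * v ^ (s - 1) with hI₁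
  have hI₀0 : 0 ≤ I₀ := setIntegral_nonneg measurableSet_Ioi (fun v hv =>
    mul_nonneg (Real.exp_pos _).le (Real.rpow_nonneg (le_of_lt hv) _))
  have hI₁0 : 0 ≤ I₁ := setIntegral_nonneg measurableSet_Ioi (fun v hv =>
    mul_nonneg (Real.exp_pos _).le (Real.rpow_nonneg (le_of_lt hv) _))
  refine ⟨I₀ + 2 * Real.pi * I₁ + 1, by nlinarith, ?_⟩
  intro x hx
  set r : ℝ := ‖x‖ with hr_def
  have hr : 0 < r := norm_pos_iff.mpr hx
  set F : EuclideanSpace ℝ (Fin n) → ℝ → ℝ := fun y u =>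
    Real.exp (-(Real.pi * ‖y‖ ^ 2 / u) - u / (4 * Real.pi)) * u ^ s with hF_def
  have key : ∀ y, besselKernel n α y = ∫⁻ u in Ioi (0:ℝ), ENNReal.ofReal (F y u) :=
    fun _ => rfl
  -- measurability
  have hFmeas : ∀ y, AEStronglyMeasurable (F y) (volume.restrict (Ioi (0:ℝ))) := by
    intro y
    apply ContinuousOn.aestronglyMeasurable _ measurableSet_Ioi
    apply ContinuousOn.mul
    · apply Real.continuous_exp.comp_continuousOn
      apply ContinuousOn.sub
      · exact (continuousOn_const.div continuousOn_id (fun u hu => ne_of_gt hu)).neg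
      · exact (continuous_id.div_const _).continuousOn
    · exact fun u hu =>
        (Real.continuousAt_rpow_const u s (Or.inl (ne_of_gt hu))).continuousWithinAt
  have hFnn : ∀ y, 0 ≤ᵐ[volume.restrict (Ioi (0:ℝ))] F y := by
    intro y
    have h : ∀ᵐ u ∂(volume.restrict (Ioi (0:ℝ))), 0 ≤ F y u := by
      rw [ae_restrict_iff' measurableSet_Ioi]
      filter_upwards with u hu
      exact mul_nonneg (Real.exp_pos _).le (Real.rpow_nonneg (le_of_lt hu) _)
    exact h
  have hEq : ∀ y, (besselKernel n α y).toReal = ∫ u in Ioi (0:ℝ), F y u := by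
    intro y
    rw [key y]
    exact (integral_eq_lintegral_of_nonneg_ae (hFnn y) (hFmeas y)).symm
  -- pointwise bound
  have hpt : ∀ (y : EuclideanSpace ℝ (Fin n)), 0 < ‖y‖ → ∀ u : ℝ, 0 < u →
      F y u ≤ Real.exp (-(‖y‖ / 2)) *
        (Real.exp (-(Real.pi / 2 * ‖y‖ ^ 2 / u)) * u ^ s) := by
    intro y hy u hu
    have h := aux_pt hy hu
    calc F y u ≤ (Real.exp (-(‖y‖ / 2)) * Real.exp (-(Real.pi / 2 * ‖y‖ ^ 2 / u))) * u ^ s :=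
          mul_le_mul_of_nonneg_right h (Real.rpow_nonneg hu.le _)
      _ = _ := by ring
  have hGint : ∀ (ρ : ℝ), 0 < ρ → ∀ t : ℝ, t < -1 →
      IntegrableOn (fun u : ℝ => Real.exp (-(Real.pi / 2 * ρ ^ 2 / u)) * u ^ t)
        (Ioi (0:ℝ)) := fun ρ hρ t ht => aux_integrable (by positivity) ht
  have hFint : ∀ y, 0 < ‖y‖ → IntegrableOn (F y) (Ioi (0:ℝ)) := by
    intro y hy
    apply Integrable.mono' (hGint ‖y‖ hy s hs) (hFmeas y)
    rw [ae_restrict_iff' measurableSet_Ioi]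
    filter_upwards with u hu
    have hu0 : (0:ℝ) < u := hu
    have h1 : (0:ℝ) ≤ F y u :=
      mul_nonneg (Real.exp_pos _).le (Real.rpow_nonneg hu0.le _)
    rw [Real.norm_eq_abs, abs_of_nonneg h1]
    have h2 := hpt y hy u hu0
    have h3 : Real.exp (-(‖y‖ / 2)) ≤ 1 := by
      rw [Real.exp_le_one_iff]
      have : (0:ℝ) < ‖y‖ / 2 := by positivity
      linarith
    calc F y u ≤ Real.exp (-(‖y‖ / 2)) *
          (Real.exp (-(Real.pi / 2 * ‖y‖ ^ 2 / u)) * u ^ s) := h2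
      _ ≤ 1 * (Real.exp (-(Real.pi / 2 * ‖y‖ ^ 2 / u)) * u ^ s) := by
          apply mul_le_mul_of_nonneg_right h3
          exact mul_nonneg (Real.exp_pos _).le (Real.rpow_nonneg hu0.le _)
      _ = _ := one_mul _
  refine ⟨?_, ?_, ?_⟩
  · -- Part 1
    rw [key x]
    have step1 : ∫⁻ u in Ioi (0:ℝ), ENNReal.ofReal (F x u) ≤
        ∫⁻ u in Ioi (0:ℝ), ENNReal.ofReal (Real.exp (-(r / 2)) *
          (Real.exp (-(Real.pi / 2 * r ^ 2 / u)) * u ^ s)) := by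
      apply lintegral_mono_ae
      rw [ae_restrict_iff' measurableSet_Ioi]
      filter_upwards with u hu
      exact ENNReal.ofReal_le_ofReal (hpt x hr u hu)
    have step2 : ∫⁻ u in Ioi (0:ℝ), ENNReal.ofReal (Real.exp (-(r / 2)) *
          (Real.exp (-(Real.pi / 2 * r ^ 2 / u)) * u ^ s)) =
        ENNReal.ofReal (Real.exp (-(r / 2)) *
          ∫ u in Ioi (0:ℝ), Real.exp (-(Real.pi / 2 * r ^ 2 / u)) * u ^ s) := by
      rw [← integral_const_mul]
      have hnn : ∀ᵐ u ∂(volume.restrict (Ioi (0:ℝ))), 0 ≤ Real.exp (-(r / 2)) *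
          (Real.exp (-(Real.pi / 2 * r ^ 2 / u)) * u ^ s) := by
        rw [ae_restrict_iff' measurableSet_Ioi]
        filter_upwards with u hu
        have hu0 : (0:ℝ) < u := hu
        positivity
      exact (ofReal_integral_eq_lintegral_ofReal ((hGint r hr s hs).const_mul _) hnn).symm
    refine le_trans step1 (le_trans (le_of_eq step2) ?_)
    apply ENNReal.ofReal_le_ofReal
    rw [aux_scale hr]
    have h2s : 2 * s + 2 = α - (n:ℝ) := by rw [hs_def]; ring
    rw [h2s, neg_div]
    have hR : (0:ℝ) ≤ r ^ (α - (n:ℝ)) := Real.rpow_nonneg hr.le _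
    have hE : (0:ℝ) < Real.exp (-(r / 2)) := Real.exp_pos _
    have hkey : (0:ℝ) ≤ (2 * Real.pi * I₁ + 1) * (r ^ (α - (n:ℝ)) * Real.exp (-(r / 2))) := by
      apply mul_nonneg (by nlinarith) (mul_nonneg hR hE.le)
    nlinarith [hkey]
  all_goals {
  -- setup for derivative
  set F' : EuclideanSpace ℝ (Fin n) → ℝ → (EuclideanSpace ℝ (Fin n) →L[ℝ] ℝ) := fun y u =>
    (Real.exp (-(Real.pi * ‖y‖ ^ 2 / u) - u / (4 * Real.pi)) * u ^ s *
      (-(2 * Real.pi / u))) • (innerSL ℝ y) with hF'_def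
  have hderiv : ∀ u : ℝ, 0 < u → ∀ y : EuclideanSpace ℝ (Fin n),
      HasFDerivAt (fun z => F z u) (F' y u) y := by
    intro u hu y
    have h0 := (hasStrictFDerivAt_norm_sq y).hasFDerivAt
    have ha : HasDerivAt (fun t : ℝ => -(Real.pi * t / u) - u / (4 * Real.pi))
        (-(Real.pi / u)) (‖y‖ ^ 2) := by
      have h1 : HasDerivAt (fun t : ℝ => Real.pi * t / u) (Real.pi / u) (‖y‖ ^ 2) := by
        simpa using ((hasDerivAt_id ((‖y‖:ℝ) ^ 2)).const_mul Real.pi).div_const u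
      simpa using (h1.neg.sub_const (u / (4 * Real.pi)))
    have h2 := (ha.exp.mul_const (u ^ s)).comp_hasFDerivAt y h0
    refine h2.congr_fderiv ?_
    ext v
    simp only [hF'_def, ContinuousLinearMap.smul_apply, innerSL_apply_apply, smul_eq_mul,
      ContinuousLinearMap.coe_smul', Pi.smul_apply, nsmul_eq_mul, Nat.cast_ofNat]
    ring
  have hε : (0:ℝ) < r / 2 := by positivity
  -- norm of F'
  have hnorm : ∀ y : EuclideanSpace ℝ (Fin n), ∀ u : ℝ, 0 < u →
      ‖F' y u‖ = Real.exp (-(Real.pi * ‖y‖ ^ 2 / u) - u / (4 * Real.pi)) * u ^ s *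
        (2 * Real.pi / u) * ‖y‖ := by
    intro y u hu
    have h : F' y u = innerSL ℝ ((Real.exp (-(Real.pi * ‖y‖ ^ 2 / u) - u / (4 * Real.pi)) *
        u ^ s * (-(2 * Real.pi / u))) • y) := by
      simp only [hF'_def]
      ext v
      simp [inner_smul_left]
    rw [h, innerSL_apply_norm, norm_smul, Real.norm_eq_abs, abs_mul, abs_mul, abs_neg,
      abs_of_pos (Real.exp_pos _), abs_of_nonneg (Real.rpow_nonneg hu.le _),
      abs_of_pos (by positivity : (0:ℝ) < 2 * Real.pi / u)]
  have hF'meas : AEStronglyMeasurable (F' x) (volume.restrict (Ioi (0:ℝ))) := by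
    have hsc : AEStronglyMeasurable
        (fun u : ℝ => Real.exp (-(Real.pi * ‖x‖ ^ 2 / u) - u / (4 * Real.pi)) * u ^ s *
          (-(2 * Real.pi / u))) (volume.restrict (Ioi (0:ℝ))) := by
      apply ContinuousOn.aestronglyMeasurable _ measurableSet_Ioi
      apply ContinuousOn.mul
      · apply ContinuousOn.mul
        · apply Real.continuous_exp.comp_continuousOn
          apply ContinuousOn.sub
          · exact (continuousOn_const.div continuousOn_id (fun u hu => ne_of_gt hu)).neg
          · exact (continuous_id.div_const _).continuousOn
        · exact fun u hu =>
            (Real.continuousAt_rpow_const u s (Or.inl (ne_of_gt hu))).continuousWithinAt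
      · exact (continuousOn_const.div continuousOn_id (fun u hu => ne_of_gt hu)).neg
    exact hsc.smul_const (innerSL ℝ x)
  -- dominated bound on the ball
  have h_bound : ∀ᵐ u ∂(volume.restrict (Ioi (0:ℝ))), ∀ y ∈ ball x (r / 2),
      ‖F' y u‖ ≤ 3 * Real.pi * r *
        (Real.exp (-(Real.pi / 4 * r ^ 2 / u)) * u ^ (s - 1)) := by
    rw [ae_restrict_iff' measurableSet_Ioi]
    filter_upwards with u hu
    intro y hy
    have hu0 : (0:ℝ) < u := hu
    have hyx : ‖y - x‖ < r / 2 := by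
      rw [← dist_eq_norm]; exact mem_ball.mp hy
    have habs := abs_norm_sub_norm_le y x
    have hy1 : ‖y‖ ≤ 3 / 2 * r := by
      have := abs_le.mp habs
      rw [← hr_def] at this
      linarith [this.1, this.2]
    have hy2 : r / 2 ≤ ‖y‖ := by
      have := abs_le.mp habs
      rw [← hr_def] at this
      linarith [this.1, this.2]
    rw [hnorm y u hu0]
    have hexp : Real.exp (-(Real.pi * ‖y‖ ^ 2 / u) - u / (4 * Real.pi)) ≤
        Real.exp (-(Real.pi / 4 * r ^ 2 / u)) := by
      apply Real.exp_le_exp.mpr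
      have h1 : Real.pi / 4 * r ^ 2 / u ≤ Real.pi * ‖y‖ ^ 2 / u := by
        have hnum : Real.pi / 4 * r ^ 2 ≤ Real.pi * ‖y‖ ^ 2 := by
          nlinarith [hy2, hr, hπ, mul_le_mul hy2 hy2 (by positivity) (norm_nonneg y)]
        exact (div_le_div_iff_of_pos_right hu0).mpr hnum
      have h2 : 0 ≤ u / (4 * Real.pi) := by positivity
      linarith
    have hus : u ^ (s - 1) = u ^ s / u := by
      rw [Real.rpow_sub hu0, Real.rpow_one]
    rw [hus]
    have hBnn : (0:ℝ) ≤ u ^ s := Real.rpow_nonneg hu0.le _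
    calc Real.exp (-(Real.pi * ‖y‖ ^ 2 / u) - u / (4 * Real.pi)) * u ^ s *
          (2 * Real.pi / u) * ‖y‖
        ≤ Real.exp (-(Real.pi / 4 * r ^ 2 / u)) * u ^ s * (2 * Real.pi / u) * (3 / 2 * r) := by
          apply mul_le_mul _ hy1 (norm_nonneg _) (by positivity)
          exact mul_le_mul_of_nonneg_right
            (mul_le_mul_of_nonneg_right hexp hBnn) (by positivity)
      _ = 3 * Real.pi * r * (Real.exp (-(Real.pi / 4 * r ^ 2 / u)) * (u ^ s / u)) := by
          field_simp
  have hbound_int : Integrable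
      (fun u : ℝ => 3 * Real.pi * r * (Real.exp (-(Real.pi / 4 * r ^ 2 / u)) * u ^ (s - 1)))
      (volume.restrict (Ioi (0:ℝ))) :=
    (aux_integrable (c := Real.pi / 4 * r ^ 2) (by positivity) hs1).const_mul _
  have h_diff : ∀ᵐ u ∂(volume.restrict (Ioi (0:ℝ))), ∀ y ∈ ball x (r / 2),
      HasFDerivAt (F · u) (F' y u) y := by
    rw [ae_restrict_iff' measurableSet_Ioi]
    filter_upwards with u hu
    exact fun y _ => hderiv u hu y
  have main := hasFDerivAt_integral_of_dominated_of_fderiv_le (ball_mem_nhds x hε)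
    (Filter.Eventually.of_forall hFmeas) (hFint x hr) hF'meas h_bound hbound_int h_diff
  have hfun : (fun y : EuclideanSpace ℝ (Fin n) => (besselKernel n α y).toReal) =
      fun y => ∫ u in Ioi (0:ℝ), F y u := funext hEq
  first
  | · -- differentiability
      rw [hfun]
      exact main.differentiableAt
  | · -- norm bound
      rw [hfun, main.fderiv]
      -- bound on ‖F' x u‖ by an explicit integrable function
      have hb2 : ∀ᵐ u ∂(volume.restrict (Ioi (0:ℝ))),
          ‖F' x u‖ ≤ 2 * Real.pi * r * Real.exp (-(r / 2)) *
            (Real.exp (-(Real.pi / 2 * r ^ 2 / u)) * u ^ (s - 1)) := by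
        rw [ae_restrict_iff' measurableSet_Ioi]
        filter_upwards with u hu
        have hu0 : (0:ℝ) < u := hu
        rw [hnorm x u hu0, ← hr_def]
        have hus : u ^ (s - 1) = u ^ s / u := by
          rw [Real.rpow_sub hu0, Real.rpow_one]
        rw [hus]
        have hBnn : (0:ℝ) ≤ u ^ s := Real.rpow_nonneg hu0.le _
        have hexp := aux_pt hr hu0
        calc Real.exp (-(Real.pi * r ^ 2 / u) - u / (4 * Real.pi)) * u ^ s *
              (2 * Real.pi / u) * r
            ≤ Real.exp (-(r / 2)) * Real.exp (-(Real.pi / 2 * r ^ 2 / u)) * u ^ s *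
              (2 * Real.pi / u) * r := by
              apply mul_le_mul_of_nonneg_right _ hr.le
              exact mul_le_mul_of_nonneg_right
                (mul_le_mul_of_nonneg_right hexp hBnn) (by positivity)
          _ = 2 * Real.pi * r * Real.exp (-(r / 2)) *
              (Real.exp (-(Real.pi / 2 * r ^ 2 / u)) * (u ^ s / u)) := by
              field_simp
      have hb2int : Integrable (fun u : ℝ => 2 * Real.pi * r * Real.exp (-(r / 2)) *
          (Real.exp (-(Real.pi / 2 * r ^ 2 / u)) * u ^ (s - 1)))
          (volume.restrict (Ioi (0:ℝ))) :=
        (hGint r hr (s - 1) hs1).const_mul _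
      have hF'int : Integrable (F' x) (volume.restrict (Ioi (0:ℝ))) :=
        Integrable.mono' hb2int hF'meas hb2
      calc ‖∫ u in Ioi (0:ℝ), F' x u‖ ≤ ∫ u in Ioi (0:ℝ), ‖F' x u‖ :=
            norm_integral_le_integral_norm _
        _ ≤ ∫ u in Ioi (0:ℝ), 2 * Real.pi * r * Real.exp (-(r / 2)) *
              (Real.exp (-(Real.pi / 2 * r ^ 2 / u)) * u ^ (s - 1)) :=
            integral_mono_ae hF'int.norm hb2int hb2
        _ = 2 * Real.pi * r * Real.exp (-(r / 2)) *
              ∫ u in Ioi (0:ℝ), Real.exp (-(Real.pi / 2 * r ^ 2 / u)) * u ^ (s - 1) :=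
            integral_const_mul _ _
        _ ≤ (I₀ + 2 * Real.pi * I₁ + 1) * r ^ (α - ↑n - 1) * Real.exp (-r / 2) := by
            rw [aux_scale hr]
            have h2s : 2 * (s - 1) + 2 = α - (n:ℝ) - 2 := by rw [hs_def]; ring
            rw [h2s, neg_div]
            have hrw : r * r ^ (α - (n:ℝ) - 2) = r ^ (α - (n:ℝ) - 1) := by
              rw [show α - (n:ℝ) - 1 = 1 + (α - (n:ℝ) - 2) by ring,
                Real.rpow_add hr, Real.rpow_one]
            have hR : (0:ℝ) ≤ r ^ (α - (n:ℝ) - 1) := Real.rpow_nonneg hr.le _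
            have hE : (0:ℝ) < Real.exp (-(r / 2)) := Real.exp_pos _
            have hkey : (0:ℝ) ≤ (I₀ + 1) *
                (r ^ (α - (n:ℝ) - 1) * Real.exp (-(r / 2))) := by
              apply mul_nonneg (by linarith) (mul_nonneg hR hE.le)
            have e1 : 2 * Real.pi * r * Real.exp (-(r / 2)) * (r ^ (α - (n:ℝ) - 2) * I₁)
                = 2 * Real.pi * I₁ * (r * r ^ (α - (n:ℝ) - 2)) * Real.exp (-(r / 2)) := by
              ring
            rw [e1, hrw]
            nlinarith [hkey]
  }
end
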